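/- arXiv:2402.00522 — 7 statements merged into one kernel-verified Lean document; each statement's English description precedes it below -/
import Mathlib

section
/- For every positive integer n there exists a constant C > 0, depending only on n, with the following property: for every positive integer T and every positive integer m there exist real coefficients α₁,…,α_m and exponents β₁,…,β_m with β_k > 0 for every k ∈ {1,…,m}, such that ∑_{s=0}^{∞} | 𝟙{s = T} − ∑_{k=1}^{m} α_k e^{−β_k s} | ≤ C · e^{0.01(n+1)T} / mⁿ. -/
open Finset Polynomial

private lemma pow_le_fact_mul_exp (n : ℕ) {u : ℝ} (hu : 0 ≤ u) :
    u ^ n ≤ n.factorial * Real.exp u := by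
  have h := Real.sum_le_exp_of_nonneg hu (n + 1)
  have h2 : u ^ n / n.factorial ≤ Real.exp u := by
    refine le_trans ?_ h
    exact Finset.single_le_sum (f := fun i => u ^ i / (i.factorial : ℝ))
      (fun i _ => by positivity) (Finset.self_mem_range_succ n)
  have hf : (0:ℝ) < n.factorial := by positivity
  rw [div_le_iff₀ hf] at h2
  linarith [h2]

set_option maxHeartbeats 1000000 in
/-- approximation of the indicator `𝟙{s = T}` in `ℓ¹(ℕ)` by sums of
`m` decaying exponentials, at rate `C · e^{0.01(n+1)T} / mⁿ`. -/
theorem stmt0 :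
    ∀ n : ℕ, 0 < n → ∃ C : ℝ, 0 < C ∧
      ∀ T m : ℕ, 0 < T → 0 < m →
        ∃ α β : Fin m → ℝ, (∀ k, 0 < β k) ∧
          (∑' s : ℕ, |(if s = T then (1 : ℝ) else 0) -
              ∑ k, α k * Real.exp (-(β k) * (s : ℝ))|)
            ≤ C * Real.exp (0.01 * ((n : ℝ) + 1) * (T : ℝ)) / (m : ℝ) ^ n := by
  intro n hn
  refine ⟨2 * Real.exp 2 * n.factorial * 100 ^ n, by positivity, ?_⟩
  intro T m hT hm
  have hfacpos : (0:ℝ) < n.factorial := by positivity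
  have hmpos : (0:ℝ) < (m:ℝ) ^ n := by positivity
  have hexpmono : Real.exp (0.02 * T) ≤ Real.exp (0.01 * ((n:ℝ) + 1) * T) := by
    apply Real.exp_le_exp.mpr
    have hn1 : (1:ℝ) ≤ (n:ℝ) := by exact_mod_cast hn
    have hT0 : (0:ℝ) ≤ (T:ℝ) := Nat.cast_nonneg T
    nlinarith
  by_cases hmT : m ≤ T
  · -- trivial approximation: α = 0
    refine ⟨fun _ => 0, fun _ => 1, fun _ => one_pos, ?_⟩
    have hs : ∀ s : ℕ, |(if s = T then (1 : ℝ) else 0) -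
        ∑ k : Fin m, (0:ℝ) * Real.exp (-(1:ℝ) * (s : ℝ))| =
        (if s = T then (1 : ℝ) else 0) := by
      intro s
      simp only [zero_mul, Finset.sum_const_zero, sub_zero]
      split <;> simp
    rw [tsum_congr hs, tsum_ite_eq]
    rw [le_div_iff₀ hmpos, one_mul]
    have h1 : ((m:ℝ)) ^ n ≤ ((T:ℝ)) ^ n := by
      apply pow_le_pow_left₀ (Nat.cast_nonneg m)
      exact_mod_cast hmT
    have h2 : ((T:ℝ)) ^ n ≤ n.factorial * 50 ^ n * Real.exp (0.02 * T) := by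
      have h3 := pow_le_fact_mul_exp n (u := 0.02 * T) (by positivity)
      calc ((T:ℝ)) ^ n = 50 ^ n * (0.02 * T) ^ n := by
            rw [← mul_pow, show (50:ℝ) * (0.02 * (T:ℝ)) = (50 * 0.02) * (T:ℝ) from by ring]
            norm_num
        _ ≤ 50 ^ n * (n.factorial * Real.exp (0.02 * T)) := by
            apply mul_le_mul_of_nonneg_left h3 (by positivity)
        _ = n.factorial * 50 ^ n * Real.exp (0.02 * T) := by ring
    have h4 : (n.factorial : ℝ) * 50 ^ n * Real.exp (0.02 * T) ≤
        2 * Real.exp 2 * n.factorial * 100 ^ n * Real.exp (0.01 * ((n:ℝ) + 1) * T) := by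
      have he2 : (1:ℝ) ≤ Real.exp 2 := by
        nlinarith [Real.add_one_le_exp (2:ℝ)]
      have h50 : ((50:ℝ)) ^ n ≤ 100 ^ n := by
        apply pow_le_pow_left₀ <;> norm_num
      have hE : (0:ℝ) < Real.exp (0.02 * T) := Real.exp_pos _
      nlinarith [mul_le_mul_of_nonneg_left hexpmono (by positivity : (0:ℝ) ≤ (n.factorial:ℝ) * 50 ^ n),
        mul_le_mul_of_nonneg_right (mul_le_mul_of_nonneg_left h50 hfacpos.le)
          (Real.exp_pos (0.01 * ((n:ℝ) + 1) * T)).le,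
        mul_pos hfacpos hE]
    linarith
  · push_neg at hmT  -- T < m
    set x : ℝ := 2⁻¹ with hxdef
    have hx0 : (0:ℝ) < x := by norm_num
    have hx1 : x < 1 := by norm_num
    clear_value x
    set a : ℕ := m - T with hadef
    have ha1 : 1 ≤ a := by omega
    have ham : a + T = m := by omega
    clear_value a
    set g : ℕ → ℝ := fun s => x ^ (s * a) * ∏ j ∈ Finset.range T, (x ^ j - x ^ s) with hgdef
    have hgT : 0 < g T := by
      apply mul_pos (pow_pos hx0 _)
      apply Finset.prod_pos
      intro j hj
      rw [Finset.mem_range] at hj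
      have := pow_lt_pow_right_of_lt_one₀ hx0 hx1 hj
      linarith
    set Q : Polynomial ℝ := X ^ a * ∏ j ∈ Finset.range T, (C (x ^ j) - X) with hQdef
    have hQeval : ∀ y : ℝ, Q.eval y = y ^ a * ∏ j ∈ Finset.range T, (x ^ j - y) := by
      intro y
      simp [hQdef, eval_prod]
    set c : ℝ := (g T)⁻¹ with hcdef
    set P : Polynomial ℝ := C c * Q with hPdef
    have hPeval : ∀ s : ℕ, P.eval (x ^ s) = c * g s := by
      intro s
      rw [hPdef, eval_mul, eval_C, hQeval, hgdef]
      simp only [← pow_mul]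
    have hPdeg : P.natDegree < m + 1 := by
      have h1 : Q.natDegree ≤ a + T := by
        refine le_trans (natDegree_mul_le) ?_
        have h2 : (∏ j ∈ Finset.range T, (C (x ^ j) - X : Polynomial ℝ)).natDegree ≤ T := by
          refine le_trans (natDegree_prod_le _ _) ?_
          have : ∀ j ∈ Finset.range T, (C (x ^ j) - X : Polynomial ℝ).natDegree ≤ 1 := by
            intro j _
            have : (C (x ^ j) - X : Polynomial ℝ) = -(X - C (x ^ j)) := by ring
            rw [this, natDegree_neg, natDegree_X_sub_C]
          calc ∑ j ∈ Finset.range T, (C (x ^ j) - X : Polynomial ℝ).natDegree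
              ≤ ∑ _j ∈ Finset.range T, 1 := Finset.sum_le_sum this
            _ = T := by simp
        simpa [natDegree_X_pow] using add_le_add_left h2 a
      have h3 : P.natDegree ≤ Q.natDegree := by
        refine le_trans natDegree_mul_le ?_
        simp
      omega
    have hcoeff0 : P.coeff 0 = 0 := by
      rw [coeff_zero_eq_eval_zero, hPdef, eval_mul, eval_C, hQeval]
      rw [zero_pow (by omega)]
      ring
    clear_value g Q c P
    refine ⟨fun k => P.coeff (k + 1), fun k => ((k:ℕ) + 1 : ℝ) * Real.log 2, ?_, ?_⟩
    · intro k
      have : (0:ℝ) < Real.log 2 := Real.log_pos (by norm_num)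
      positivity
    · have hsum : ∀ s : ℕ, (∑ k : Fin m, P.coeff ((k:ℕ) + 1) *
          Real.exp (-(((k:ℕ) + 1 : ℝ) * Real.log 2) * (s : ℝ))) = c * g s := by
        intro s
        have hterm : ∀ k : ℕ, P.coeff (k + 1) *
            Real.exp (-(((k:ℕ) + 1 : ℝ) * Real.log 2) * (s : ℝ)) =
            P.coeff (k + 1) * (x ^ s) ^ (k + 1) := by
          intro k
          congr 1
          have hlog : -(((k:ℕ) + 1 : ℝ) * Real.log 2) * (s : ℝ)
              = (((k + 1) * s : ℕ) : ℝ) * Real.log x := by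
            rw [hxdef, Real.log_inv]
            push_cast
            ring
          rw [hlog, Real.exp_nat_mul, Real.exp_log hx0, ← pow_mul, mul_comm s (k+1), pow_mul]
        calc (∑ k : Fin m, P.coeff ((k:ℕ) + 1) *
              Real.exp (-(((k:ℕ) + 1 : ℝ) * Real.log 2) * (s : ℝ)))
            = ∑ k : Fin m, P.coeff ((k:ℕ) + 1) * (x ^ s) ^ ((k:ℕ) + 1) := by
              exact Finset.sum_congr rfl fun k _ => hterm k
          _ = ∑ i ∈ Finset.range m, P.coeff (i + 1) * (x ^ s) ^ (i + 1) :=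
              Fin.sum_univ_eq_sum_range (fun i => P.coeff (i + 1) * (x ^ s) ^ (i + 1)) m
          _ = ∑ i ∈ Finset.range (m + 1), P.coeff i * (x ^ s) ^ i := by
              rw [Finset.sum_range_succ']
              simp [hcoeff0]
          _ = P.eval (x ^ s) := (eval_eq_sum_range' hPdeg _).symm
          _ = c * g s := hPeval s
      have hsummand : ∀ s : ℕ, |(if s = T then (1 : ℝ) else 0) -
          ∑ k : Fin m, P.coeff ((k:ℕ) + 1) * Real.exp (-(((k:ℕ) + 1 : ℝ) * Real.log 2) * (s : ℝ))|
          = |(if s = T then (1 : ℝ) else 0) - c * g s| := fun s => by rw [hsum s]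
      set F : ℕ → ℝ := fun s => |(if s = T then (1 : ℝ) else 0) - c * g s| with hFdef
      -- F vanishes for s ≤ T
      have hFlt : ∀ s, s < T → F s = 0 := by
        intro s hs
        have hgz : g s = 0 := by
          have hz : ∏ j ∈ Finset.range T, (x ^ j - x ^ s) = 0 :=
            Finset.prod_eq_zero (Finset.mem_range.mpr hs) (sub_self (x ^ s))
          simp [hgdef, hz]
        simp only [hFdef]
        rw [if_neg (Nat.ne_of_lt hs), hgz]
        simp
      have hFT : F T = 0 := by
        simp [hFdef, hcdef, inv_mul_cancel₀ (ne_of_gt hgT)]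
      -- key estimate for s > T
      have hxs_le : ∀ i j : ℕ, i ≤ j → x ^ j ≤ x ^ i :=
        fun i j h => pow_le_pow_of_le_one hx0.le hx1.le h
      have hprod_bound : ∀ r : ℕ,
          ∏ j ∈ Finset.range T, (x ^ j - x ^ (r + (T + 1))) ≤
          Real.exp 2 * ∏ j ∈ Finset.range T, (x ^ j - x ^ T) := by
        intro r
        set s := r + (T + 1) with hs
        have hTs : T + 1 ≤ s := by omega
        have step1 : ∏ j ∈ Finset.range T, (x ^ j - x ^ s) ≤
            ∏ j ∈ Finset.range T, ((x ^ j - x ^ T) * (1 + 2 * x ^ (T - j))) := by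
          apply Finset.prod_le_prod
          · intro j hj
            rw [Finset.mem_range] at hj
            have := hxs_le j s (by omega)
            linarith
          · intro j hj
            rw [Finset.mem_range] at hj
            have e1 : x ^ T = x ^ j * x ^ (T - j) := by
              rw [← pow_add]; congr 1; omega
            have e2 : x ^ (T - j) ≤ x := by
              have := hxs_le 1 (T - j) (by omega)
              simpa using this
            have e3 : (0:ℝ) < x ^ j := pow_pos hx0 _
            have e4 : (0:ℝ) ≤ x ^ (T - j) := pow_nonneg hx0.le _
            have e5 : (0:ℝ) ≤ x ^ s := pow_nonneg hx0.le _
            have hu : x ^ (T - j) ≤ 2⁻¹ := by rw [hxdef] at e2 ⊢; exact e2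
            nlinarith [mul_nonneg (mul_nonneg e3.le e4) (by linarith : (0:ℝ) ≤ 1 - 2 * x ^ (T - j))]
        have step2 : ∏ j ∈ Finset.range T, ((x ^ j - x ^ T) * (1 + 2 * x ^ (T - j))) =
            (∏ j ∈ Finset.range T, (x ^ j - x ^ T)) * ∏ j ∈ Finset.range T, (1 + 2 * x ^ (T - j)) :=
          Finset.prod_mul_distrib
        have step3 : ∏ j ∈ Finset.range T, (1 + 2 * x ^ (T - j)) ≤ Real.exp 2 := by
          have h1 : ∏ j ∈ Finset.range T, (1 + 2 * x ^ (T - j)) ≤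
              ∏ j ∈ Finset.range T, Real.exp (2 * x ^ (T - j)) := by
            apply Finset.prod_le_prod
            · intro j _
              have := pow_nonneg hx0.le (T - j)
              linarith
            · intro j _
              have := Real.add_one_le_exp (2 * x ^ (T - j))
              linarith
          have h2 : ∏ j ∈ Finset.range T, Real.exp (2 * x ^ (T - j)) =
              Real.exp (∑ j ∈ Finset.range T, 2 * x ^ (T - j)) := (Real.exp_sum _ _).symm
          have h3 : ∑ j ∈ Finset.range T, 2 * x ^ (T - j) ≤ 2 := by
            have hrefl : ∑ j ∈ Finset.range T, x ^ (T - j) =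
                ∑ j ∈ Finset.range T, x ^ (j + 1) := by
              have := Finset.sum_range_reflect (fun j => x ^ (j + 1)) T
              rw [← this]
              apply Finset.sum_congr rfl
              intro j hj
              rw [Finset.mem_range] at hj
              congr 1
              omega
            have hgeo : ∑ j ∈ Finset.range T, x ^ (j + 1) ≤ 1 := by
              have h5 : ∑ j ∈ Finset.range T, x ^ (j + 1) =
                  x * ∑ j ∈ Finset.range T, x ^ j := by
                rw [Finset.mul_sum]
                apply Finset.sum_congr rfl
                intro j _; rw [pow_succ]; ring
              have h6 : ∑ j ∈ Finset.range T, x ^ j ≤ 2 := by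
                have := sum_geometric_two_le T
                have hxx : x = (1/2 : ℝ) := by norm_num [hxdef]
                rw [hxx]; exact this
              rw [h5]
              calc x * ∑ j ∈ Finset.range T, x ^ j ≤ x * 2 :=
                  mul_le_mul_of_nonneg_left h6 hx0.le
                _ = 1 := by rw [hxdef]; norm_num
            rw [← Finset.mul_sum, hrefl]
            linarith [hgeo]
          calc ∏ j ∈ Finset.range T, (1 + 2 * x ^ (T - j)) ≤
              Real.exp (∑ j ∈ Finset.range T, 2 * x ^ (T - j)) := by rw [← h2]; exact h1
            _ ≤ Real.exp 2 := Real.exp_le_exp.mpr h3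
        have hDpos : 0 < ∏ j ∈ Finset.range T, (x ^ j - x ^ T) := by
          apply Finset.prod_pos
          intro j hj
          rw [Finset.mem_range] at hj
          have := pow_lt_pow_right_of_lt_one₀ hx0 hx1 hj
          linarith
        calc ∏ j ∈ Finset.range T, (x ^ j - x ^ s)
            ≤ (∏ j ∈ Finset.range T, (x ^ j - x ^ T)) *
              ∏ j ∈ Finset.range T, (1 + 2 * x ^ (T - j)) := by rw [← step2]; exact step1
          _ ≤ (∏ j ∈ Finset.range T, (x ^ j - x ^ T)) * Real.exp 2 :=
              mul_le_mul_of_nonneg_left step3 hDpos.le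
          _ = Real.exp 2 * ∏ j ∈ Finset.range T, (x ^ j - x ^ T) := mul_comm _ _
      have hFgt : ∀ r : ℕ, F (r + (T + 1)) ≤ Real.exp 2 * x ^ a * x ^ r := by
        intro r
        set s := r + (T + 1) with hs
        have hne : s ≠ T := by omega
        have hgs_nonneg : 0 ≤ g s := by
          rw [hgdef]
          apply mul_nonneg (pow_nonneg hx0.le _)
          apply Finset.prod_nonneg
          intro j hj
          rw [Finset.mem_range] at hj
          have := hxs_le j s (by omega)
          linarith
        have hFs : F s = c * g s := by
          have hc : 0 < c := by rw [hcdef]; exact inv_pos.mpr hgT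
          simp only [hFdef, if_neg hne, zero_sub, abs_neg]
          exact abs_of_nonneg (mul_nonneg hc.le hgs_nonneg)
        rw [hFs]
        have hkey : g s ≤ Real.exp 2 * x ^ a * x ^ r * g T := by
          have hxpow : x ^ (s * a) ≤ x ^ (T * a) * x ^ a * x ^ r := by
            rw [← pow_add, ← pow_add]
            apply hxs_le
            have : T * a + a + r ≤ T * a + a + r * a := by
              have := Nat.mul_le_mul_left r ha1
              omega
            have hsa : s * a = T * a + a + r * a := by
              rw [hs]; ring
            omega
          calc g s = x ^ (s * a) * ∏ j ∈ Finset.range T, (x ^ j - x ^ s) := by rw [hgdef]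
            _ ≤ x ^ (s * a) * (Real.exp 2 * ∏ j ∈ Finset.range T, (x ^ j - x ^ T)) := by
                apply mul_le_mul_of_nonneg_left _ (pow_nonneg hx0.le _)
                exact hprod_bound r
            _ ≤ (x ^ (T * a) * x ^ a * x ^ r) *
                (Real.exp 2 * ∏ j ∈ Finset.range T, (x ^ j - x ^ T)) := by
                apply mul_le_mul_of_nonneg_right hxpow
                apply mul_nonneg (Real.exp_pos 2).le
                apply Finset.prod_nonneg
                intro j hj
                rw [Finset.mem_range] at hj
                have := hxs_le j T (by omega)
                linarith
            _ = Real.exp 2 * x ^ a * x ^ r * (x ^ (T * a) * ∏ j ∈ Finset.range T, (x ^ j - x ^ T)) := by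
                ring
            _ = Real.exp 2 * x ^ a * x ^ r * g T := by rw [hgdef]
        have hc : 0 < c := by rw [hcdef]; exact inv_pos.mpr hgT
        calc c * g s ≤ c * (Real.exp 2 * x ^ a * x ^ r * g T) :=
            mul_le_mul_of_nonneg_left hkey hc.le
          _ = Real.exp 2 * x ^ a * x ^ r * (c * g T) := by ring
          _ = Real.exp 2 * x ^ a * x ^ r := by
              rw [hcdef, inv_mul_cancel₀ (ne_of_gt hgT)]; ring
      -- summability
      have hgeomsum : Summable (fun r : ℕ => Real.exp 2 * x ^ a * x ^ r) :=
        (summable_geometric_of_lt_one hx0.le hx1).mul_left _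
      have hFnn : ∀ s, 0 ≤ F s := fun s => abs_nonneg _
      have hFshift : Summable (fun r : ℕ => F (r + (T + 1))) :=
        Summable.of_nonneg_of_le (fun r => hFnn _) hFgt hgeomsum
      have hFsummable : Summable F := (summable_nat_add_iff (T + 1)).mp hFshift
      have htsum : ∑' s : ℕ, F s ≤ Real.exp 2 * x ^ a * 2 := by
        have hsplit := Summable.sum_add_tsum_nat_add (f := F) (T + 1) hFsummable
        have hzero : ∑ i ∈ Finset.range (T + 1), F i = 0 := by
          apply Finset.sum_eq_zero
          intro i hi
          rw [Finset.mem_range] at hi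
          rcases Nat.lt_or_ge i T with h | h
          · exact hFlt i h
          · have : i = T := by omega
            rw [this]; exact hFT
        have hle : ∑' r : ℕ, F (r + (T + 1)) ≤ ∑' r : ℕ, Real.exp 2 * x ^ a * x ^ r :=
          Summable.tsum_le_tsum hFgt hFshift hgeomsum
        have heq : ∑' r : ℕ, Real.exp 2 * x ^ a * x ^ r = Real.exp 2 * x ^ a * 2 := by
          rw [tsum_mul_left, tsum_geometric_of_lt_one hx0.le hx1]
          norm_num [hxdef]
        rw [← hsplit, hzero, zero_add]
        rw [heq] at hle
        exact hle
      -- final numeric bound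
      have hfinal : Real.exp 2 * x ^ a * 2 ≤
          2 * Real.exp 2 * n.factorial * 100 ^ n * Real.exp (0.01 * ((n:ℝ) + 1) * T) / (m:ℝ) ^ n := by
        rw [le_div_iff₀ hmpos]
        have hmn : ((m:ℝ)) ^ n ≤ n.factorial * 100 ^ n * Real.exp (0.01 * m) := by
          have h3 := pow_le_fact_mul_exp n (u := 0.01 * m) (by positivity)
          calc ((m:ℝ)) ^ n = 100 ^ n * (0.01 * m) ^ n := by
                rw [← mul_pow, show (100:ℝ) * (0.01 * (m:ℝ)) = (100 * 0.01) * (m:ℝ) from by ring]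
                norm_num
            _ ≤ 100 ^ n * (n.factorial * Real.exp (0.01 * m)) := by
                apply mul_le_mul_of_nonneg_left h3 (by positivity)
            _ = n.factorial * 100 ^ n * Real.exp (0.01 * m) := by ring
        have hxa : x ^ a = Real.exp (-((a:ℝ) * Real.log 2)) := by
          have : -((a:ℝ) * Real.log 2) = (a:ℝ) * Real.log x := by
            rw [hxdef, Real.log_inv]; ring
          rw [this, Real.exp_nat_mul, Real.exp_log hx0]
        have hexpcomb : Real.exp (0.01 * m) * Real.exp (-((a:ℝ) * Real.log 2)) ≤
            Real.exp (0.01 * ((n:ℝ) + 1) * T) := by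
          rw [← Real.exp_add]
          apply Real.exp_le_exp.mpr
          have hma : (m:ℝ) = (a:ℝ) + (T:ℝ) := by exact_mod_cast ham.symm
          have hlog2 : (0.01:ℝ) ≤ Real.log 2 := by
            linarith [Real.log_two_gt_d9]
          have hn1 : (1:ℝ) ≤ (n:ℝ) := by exact_mod_cast hn
          have hT0 : (0:ℝ) ≤ (T:ℝ) := Nat.cast_nonneg T
          have ha0 : (0:ℝ) ≤ (a:ℝ) := Nat.cast_nonneg a
          nlinarith [mul_nonneg ha0 (by linarith [Real.log_two_gt_d9] : (0:ℝ) ≤ Real.log 2 - 0.01),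
            mul_nonneg (by linarith : (0:ℝ) ≤ (n:ℝ)) hT0]
        have hpos1 : (0:ℝ) ≤ Real.exp 2 * x ^ a * 2 := by
          have := pow_nonneg hx0.le a
          have := (Real.exp_pos 2).le
          nlinarith
        calc Real.exp 2 * x ^ a * 2 * (m:ℝ) ^ n
            ≤ Real.exp 2 * x ^ a * 2 * (n.factorial * 100 ^ n * Real.exp (0.01 * m)) := by
              apply mul_le_mul_of_nonneg_left hmn hpos1
          _ = 2 * Real.exp 2 * n.factorial * 100 ^ n *
              (Real.exp (0.01 * m) * Real.exp (-((a:ℝ) * Real.log 2))) := by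
              rw [hxa]; ring
          _ ≤ 2 * Real.exp 2 * n.factorial * 100 ^ n * Real.exp (0.01 * ((n:ℝ) + 1) * T) := by
              apply mul_le_mul_of_nonneg_left hexpcomb (by positivity)
      calc (∑' s : ℕ, |(if s = T then (1 : ℝ) else 0) -
            ∑ k : Fin m, P.coeff ((k:ℕ) + 1) * Real.exp (-(((k:ℕ) + 1 : ℝ) * Real.log 2) * (s : ℝ))|)
          = ∑' s : ℕ, F s := tsum_congr hsummand
        _ ≤ Real.exp 2 * x ^ a * 2 := htsum
        _ ≤ _ := hfinal
end

section
/- Let ρ : ℕ → ℝ be exponentially decaying, i.e. there exist constants C₀ > 0 and β > 0 such that |ρ(t)| ≤ C₀ e^{−β t} for all t ∈ ℕ. Then for every integer n with 1 ≤ n ≤ ⌊99β⌋ there exists a constant C > 0 (depending on ρ, β and n) such that for every positive integer m there exist real coefficients α₁,…,α_m and exponents β₁,…,β_m with β_k > 0 for every k, such that ∑_{s=0}^{∞} | ρ(s) − ∑_{k=1}^{m} α_k e^{−β_k s} | ≤ C / mⁿ. -/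
open Polynomial Finset

noncomputable def interpPoly (v : ℕ → ℝ) (x : ℝ) (T : ℕ) : Polynomial ℝ :=
  ∑ t ∈ Finset.range T,
    Polynomial.C (v t / (x ^ t * ∏ j ∈ (Finset.range T).erase t, (x ^ t - x ^ j))) *
      (Polynomial.X * ∏ j ∈ (Finset.range T).erase t, (Polynomial.X - Polynomial.C (x ^ j)))

lemma node_gap {x : ℝ} (hx0 : 0 < x) (hx2 : x ≤ 1/2) {t j : ℕ} (h : t ≠ j) :
    x ^ j ≤ 2 * |x ^ t - x ^ j| := by
  have hx1 : x ≤ 1 := by linarith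
  rcases Nat.lt_or_ge t j with hlt | hge
  · have h1 : x ^ j ≤ x * x ^ t := by
      calc x ^ j ≤ x ^ (t+1) := pow_le_pow_of_le_one hx0.le hx1 hlt
        _ = x * x ^ t := by ring
    have h2 : x * x ^ t ≤ x ^ t / 2 := by nlinarith [pow_pos hx0 t]
    have h3 : x ^ j ≤ x ^ t := pow_le_pow_of_le_one hx0.le hx1 hlt.le
    rw [abs_of_nonneg (by linarith)]
    linarith
  · have hjt : j < t := lt_of_le_of_ne hge (Ne.symm h)
    have h1 : x ^ t ≤ x * x ^ j := by
      calc x ^ t ≤ x ^ (j+1) := pow_le_pow_of_le_one hx0.le hx1 hjt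
        _ = x * x ^ j := by ring
    have h2 : x * x ^ j ≤ x ^ j / 2 := by nlinarith [pow_pos hx0 j]
    rw [abs_of_nonpos (by nlinarith [pow_pos hx0 j])]
    linarith

lemma interpPoly_natDegree_le (v : ℕ → ℝ) (x : ℝ) (T : ℕ) :
    (interpPoly v x T).natDegree ≤ T := by
  refine (Polynomial.natDegree_sum_le _ _).trans ?_
  simp only [Finset.fold_max_le]
  refine ⟨Nat.zero_le _, fun t ht => ?_⟩
  refine (Polynomial.natDegree_C_mul_le _ _).trans ?_
  refine (Polynomial.natDegree_mul_le).trans ?_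
  have h1 : (∏ j ∈ (Finset.range T).erase t, (Polynomial.X - Polynomial.C (x ^ j))).natDegree
      ≤ T - 1 := by
    refine (Polynomial.natDegree_prod_le _ _).trans ?_
    have h2 : ∑ j ∈ (Finset.range T).erase t, (Polynomial.X - Polynomial.C (x ^ j)).natDegree
        ≤ ∑ _j ∈ (Finset.range T).erase t, 1 :=
      Finset.sum_le_sum (fun j _ => le_of_eq (Polynomial.natDegree_X_sub_C _))
    refine h2.trans ?_
    rw [Finset.sum_const, smul_eq_mul, mul_one, Finset.card_erase_of_mem ht,
      Finset.card_range]
  have hT : 1 ≤ T := by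
    rcases Finset.mem_range.mp ht with h; omega
  have hX : (Polynomial.X : Polynomial ℝ).natDegree = 1 := Polynomial.natDegree_X
  omega

lemma interpPoly_coeff_zero (v : ℕ → ℝ) (x : ℝ) (T : ℕ) :
    (interpPoly v x T).coeff 0 = 0 := by
  rw [Polynomial.coeff_zero_eq_eval_zero, interpPoly]
  rw [Polynomial.eval_finset_sum]
  apply Finset.sum_eq_zero
  intro t _
  simp

lemma interpPoly_eval_node (v : ℕ → ℝ) {x : ℝ} (hx0 : 0 < x) (hx1 : x < 1) {T t : ℕ}
    (ht : t ∈ Finset.range T) :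
    (interpPoly v x T).eval (x ^ t) = v t := by
  have hinj : ∀ a b : ℕ, x ^ a = x ^ b → a = b := fun a b h => by
    by_contra hne
    rcases Nat.lt_or_ge a b with h' | h'
    · exact absurd h (ne_of_gt (pow_lt_pow_right_of_lt_one₀ hx0 hx1 h'))
    · have hba : b < a := lt_of_le_of_ne h' (Ne.symm hne)
      exact absurd h.symm (ne_of_gt (pow_lt_pow_right_of_lt_one₀ hx0 hx1 hba))
  rw [interpPoly, Polynomial.eval_finset_sum]
  rw [Finset.sum_eq_single t]
  · have hne : (x ^ t * ∏ j ∈ (Finset.range T).erase t, (x ^ t - x ^ j)) ≠ 0 := by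
      apply mul_ne_zero (pow_ne_zero _ hx0.ne')
      apply Finset.prod_ne_zero_iff.mpr
      intro j hj
      have hjt : j ≠ t := Finset.ne_of_mem_erase hj
      intro h
      exact hjt (hinj j t (by linarith [sub_eq_zero.mp h]))
    simp only [Polynomial.eval_mul, Polynomial.eval_C, Polynomial.eval_X,
      Polynomial.eval_prod, Polynomial.eval_sub]
    field_simp
    exact mul_div_cancel_right₀ _ (right_ne_zero_of_mul hne)
  · intro t' _ hne
    have hmem : t ∈ (Finset.range T).erase t' := Finset.mem_erase.mpr ⟨fun h => hne h.symm, ht⟩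
    simp only [Polynomial.eval_mul, Polynomial.eval_C, Polynomial.eval_X, Polynomial.eval_prod,
      Polynomial.eval_sub]
    have hz : (∏ j ∈ (Finset.range T).erase t', (x ^ t - x ^ j)) = 0 :=
      Finset.prod_eq_zero hmem (sub_self (x ^ t))
    rw [hz]
    ring
  · intro h; exact absurd ht h

lemma interpPoly_tail (v : ℕ → ℝ) {V x : ℝ} (hV : ∀ t, |v t| ≤ V)
    (hx0 : 0 < x) (hx2 : x ≤ 1/2) {T : ℕ} (u : ℕ) :
    |(interpPoly v x T).eval (x ^ (T + u))| ≤ (T : ℝ) * V * 4 ^ (T - 1) * x ^ (u + 1) := by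
  have hx1 : x ≤ 1 := by linarith
  rw [interpPoly, Polynomial.eval_finset_sum]
  refine (Finset.abs_sum_le_sum_abs _ _).trans ?_
  have key : ∀ t ∈ Finset.range T,
      |Polynomial.eval (x ^ (T + u))
        (Polynomial.C (v t / (x ^ t * ∏ j ∈ (Finset.range T).erase t, (x ^ t - x ^ j))) *
          (Polynomial.X * ∏ j ∈ (Finset.range T).erase t,
            (Polynomial.X - Polynomial.C (x ^ j))))|
      ≤ V * 4 ^ (T - 1) * x ^ (u + 1) := by
    intro t ht
    have htT : t < T := Finset.mem_range.mp ht
    simp only [Polynomial.eval_mul, Polynomial.eval_C, Polynomial.eval_X,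
      Polynomial.eval_prod, Polynomial.eval_sub]
    rw [abs_mul, abs_mul]
    set w : ℝ := x ^ t * ∏ j ∈ (Finset.range T).erase t, (x ^ t - x ^ j) with hw
    -- bound the numerator product by 4^(T-1) * x^(u+1) * |w|
    have hcard : ((Finset.range T).erase t).card = T - 1 := by
      rw [Finset.card_erase_of_mem ht, Finset.card_range]
    have habsw : |w| = x ^ t * ∏ j ∈ (Finset.range T).erase t, |x ^ t - x ^ j| := by
      rw [hw, abs_mul, abs_pow, abs_of_pos hx0, Finset.abs_prod]
    have hprod : ∏ j ∈ (Finset.range T).erase t, |x ^ (T + u) - x ^ j|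
        ≤ ∏ j ∈ (Finset.range T).erase t, (4 * |x ^ t - x ^ j|) := by
      refine Finset.prod_le_prod (fun j _ => abs_nonneg _) ?_
      intro j hj
      have hjt : j ≠ t := Finset.ne_of_mem_erase hj
      have hjT : j < T := Finset.mem_range.mp (Finset.mem_of_mem_erase hj)
      have h1 : |x ^ (T + u) - x ^ j| ≤ x ^ j := by
        have h2 : x ^ (T + u) ≤ x ^ j :=
          pow_le_pow_of_le_one hx0.le hx1 (by omega)
        have h3 : 0 < x ^ (T + u) := pow_pos hx0 _
        rw [abs_of_nonpos (by linarith)]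
        linarith
      have h4 : x ^ j ≤ 2 * |x ^ t - x ^ j| := node_gap hx0 hx2 hjt.symm
      have h5 : (0:ℝ) ≤ |x ^ t - x ^ j| := abs_nonneg _
      linarith
    have hpow : x ^ (T + u) ≤ x ^ (u + 1) * x ^ t := by
      rw [← pow_add]
      exact pow_le_pow_of_le_one hx0.le hx1 (by omega)
    have hnum : |x ^ (T + u)| * |∏ j ∈ (Finset.range T).erase t, (x ^ (T + u) - x ^ j)|
        ≤ 4 ^ (T - 1) * x ^ (u + 1) * |w| := by
      rw [abs_of_pos (pow_pos hx0 _), Finset.abs_prod]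
      calc x ^ (T + u) * ∏ j ∈ (Finset.range T).erase t, |x ^ (T + u) - x ^ j|
          ≤ (x ^ (u + 1) * x ^ t) * ∏ j ∈ (Finset.range T).erase t, (4 * |x ^ t - x ^ j|) := by
            refine mul_le_mul hpow hprod (Finset.prod_nonneg fun j _ => abs_nonneg _)
              (by positivity)
        _ = 4 ^ (T - 1) * x ^ (u + 1) * (x ^ t * ∏ j ∈ (Finset.range T).erase t, |x ^ t - x ^ j|) := by
            rw [Finset.prod_mul_distrib, Finset.prod_const, hcard]
            ring
        _ = 4 ^ (T - 1) * x ^ (u + 1) * |w| := by rw [habsw]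
    -- combine
    have hV0 : 0 ≤ V := (abs_nonneg _).trans (hV 0)
    rcases eq_or_ne w 0 with hw0 | hw0
    · rw [hw0]
      simp only [div_zero, abs_zero, zero_mul]
      exact mul_nonneg (mul_nonneg hV0 (by positivity)) (by positivity)
    · have hwpos : 0 < |w| := abs_pos.mpr hw0
      rw [abs_div]
      rw [div_mul_eq_mul_div, div_le_iff₀ hwpos]
      calc |v t| * (|x ^ (T + u)| * |∏ j ∈ (Finset.range T).erase t, (x ^ (T + u) - x ^ j)|)
          ≤ V * (4 ^ (T - 1) * x ^ (u + 1) * |w|) :=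
            mul_le_mul (hV t) hnum (by positivity) hV0
        _ = V * 4 ^ (T - 1) * x ^ (u + 1) * |w| := by ring
  calc ∑ t ∈ Finset.range T, |Polynomial.eval (x ^ (T + u)) _|
      ≤ ∑ _t ∈ Finset.range T, (V * 4 ^ (T - 1) * x ^ (u + 1)) := Finset.sum_le_sum key
    _ = (T : ℝ) * V * 4 ^ (T - 1) * x ^ (u + 1) := by
        rw [Finset.sum_const, Finset.card_range, nsmul_eq_mul]; ring

/-- A polynomial with zero constant coefficient, evaluated via its coefficients `1..m`. -/
lemma eval_as_shift_sum {p : Polynomial ℝ} {m : ℕ} (hdeg : p.natDegree ≤ m)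
    (h0 : p.coeff 0 = 0) (y : ℝ) :
    p.eval y = ∑ i ∈ Finset.range m, p.coeff (i + 1) * y ^ (i + 1) := by
  rw [Polynomial.eval_eq_sum_range' (Nat.lt_succ_of_le hdeg) y, Finset.sum_range_succ']
  simp [h0]

set_option maxHeartbeats 2000000 in
/-- an exponentially decaying kernel `ρ` (`|ρ(t)| ≤ C₀ e^{−βt}`) can be
approximated in `ℓ¹(ℕ)` by sums of `m` decaying exponentials at rate `C / mⁿ`,
for every `1 ≤ n ≤ ⌊99β⌋`. -/
theorem stmt2 (ρ : ℕ → ℝ) (C₀ β : ℝ) (hC₀ : 0 < C₀) (hβ : 0 < β)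
    (hρ : ∀ t : ℕ, |ρ t| ≤ C₀ * Real.exp (-β * (t : ℝ))) :
    ∀ n : ℕ, 1 ≤ n → (n : ℤ) ≤ ⌊99 * β⌋ →
      ∃ C : ℝ, 0 < C ∧
        ∀ m : ℕ, 0 < m →
          ∃ α b : Fin m → ℝ, (∀ k, 0 < b k) ∧
            (∑' s : ℕ, |ρ s - ∑ k, α k * Real.exp (-(b k) * (s : ℝ))|)
              ≤ C / (m : ℝ) ^ n := by
  intro n _hn1 _hn2
  set r : ℝ := Real.exp (-β) with hrdef
  have hr0 : 0 < r := Real.exp_pos _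
  have hr1 : r < 1 := Real.exp_lt_one_iff.mpr (by linarith)
  have hρ' : ∀ s : ℕ, |ρ s| ≤ C₀ * r ^ s := by
    intro s
    have h := hρ s
    rwa [show -β * (s : ℝ) = (s : ℝ) * (-β) by ring, Real.exp_nat_mul] at h
  have hρC₀ : ∀ s : ℕ, |ρ s| ≤ C₀ := by
    intro s
    refine (hρ' s).trans ?_
    nlinarith [pow_le_one₀ hr0.le hr1.le (n := s)]
  set E₀ : ℝ := C₀ / (1 - r) with hE₀def
  have hE₀ : 0 < E₀ := div_pos hC₀ (by linarith)
  clear_value E₀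
  -- threshold M beyond which T ≤ m
  obtain ⟨M, hM⟩ : ∃ M : ℕ, ∀ m : ℕ, M ≤ m → ((n : ℝ) / β) * Real.log m + 2 ≤ (m : ℝ) := by
    have hlo : (fun y : ℝ => ((n : ℝ) / β) * Real.log y) =o[Filter.atTop] id :=
      Real.isLittleO_log_id_atTop.const_mul_left _
    have hev := hlo.def one_half_pos
    obtain ⟨y₀, hy₀⟩ := Filter.eventually_atTop.mp
      (hev.and (Filter.eventually_ge_atTop (4 : ℝ)))
    refine ⟨⌈y₀⌉₊, fun m hm => ?_⟩
    have hmy : y₀ ≤ (m : ℝ) := (Nat.le_ceil y₀).trans (by exact_mod_cast hm)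
    obtain ⟨h1, h2⟩ := hy₀ (m : ℝ) hmy
    simp only [Real.norm_eq_abs, id] at h1
    have h3 : ((n : ℝ) / β) * Real.log m ≤ (1/2) * (m : ℝ) := by
      have := le_abs_self (((n : ℝ) / β) * Real.log m)
      rw [abs_of_nonneg (by linarith : (0:ℝ) ≤ (m : ℝ))] at h1
      linarith
    linarith
  refine ⟨E₀ * (M : ℝ) ^ n + E₀ + C₀ + 1, by positivity, ?_⟩
  intro m hm
  have hm1 : (1 : ℝ) ≤ (m : ℝ) := by exact_mod_cast hm
  have hmn1 : (1 : ℝ) ≤ (m : ℝ) ^ n := one_le_pow₀ hm1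
  have hmn0 : (0 : ℝ) < (m : ℝ) ^ n := by positivity
  by_cases hMm : M ≤ m
  swap
  · -- small m : use the zero approximant
    refine ⟨0, fun _ => 1, fun k => one_pos, ?_⟩
    have hz : ∀ s : ℕ, |ρ s - ∑ k : Fin m, (0:ℝ) * Real.exp (-(1:ℝ) * (s : ℝ))| = |ρ s| := by
      intro s; simp
    calc ∑' s : ℕ, |ρ s - ∑ k : Fin m, (0:ℝ) * Real.exp (-(1:ℝ) * (s : ℝ))|
        = ∑' s : ℕ, |ρ s| := tsum_congr hz
      _ ≤ ∑' s : ℕ, C₀ * r ^ s := by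
          refine Summable.tsum_le_tsum hρ' ?_ ?_
          · exact Summable.of_nonneg_of_le (fun s => abs_nonneg _) hρ'
              ((summable_geometric_of_lt_one hr0.le hr1).mul_left C₀)
          · exact (summable_geometric_of_lt_one hr0.le hr1).mul_left C₀
      _ = E₀ := by
          rw [tsum_mul_left, tsum_geometric_of_lt_one hr0.le hr1, hE₀def, div_eq_mul_inv]
      _ ≤ (E₀ * (M : ℝ) ^ n + E₀ + C₀ + 1) / (m : ℝ) ^ n := by
          rw [le_div_iff₀ hmn0]
          have hmM : (m : ℝ) ^ n ≤ (M : ℝ) ^ n := by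
            have hle : (m : ℝ) ≤ (M : ℝ) := by exact_mod_cast le_of_not_ge hMm
            gcongr
          nlinarith
  · -- main case
    have hlogm : 0 ≤ Real.log m := Real.log_nonneg hm1
    set T : ℕ := ⌈((n : ℝ) / β) * Real.log m⌉₊ + 1 with hTdef
    have hT1 : 1 ≤ T := Nat.le_add_left 1 _
    clear_value T
    have hTpos : (0 : ℝ) < (T : ℝ) := by exact_mod_cast hT1
    have hTm : T ≤ m := by
      have hceil : (⌈((n : ℝ) / β) * Real.log m⌉₊ : ℝ) < ((n : ℝ) / β) * Real.log m + 1 :=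
        Nat.ceil_lt_add_one (by positivity)
      have h2 := hM m hMm
      have hTr : (T : ℝ) ≤ (m : ℝ) := by
        rw [hTdef]; push_cast; linarith
      exact_mod_cast hTr
    have hrT : r ^ T ≤ ((m : ℝ) ^ n)⁻¹ := by
      have h1 : (n : ℝ) * Real.log m ≤ β * (T : ℝ) := by
        have h2 : ((n : ℝ) / β) * Real.log m ≤ (⌈((n : ℝ) / β) * Real.log m⌉₊ : ℝ) :=
          Nat.le_ceil _
      
        have h3 : (⌈((n : ℝ) / β) * Real.log m⌉₊ : ℝ) ≤ (T : ℝ) := by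
          rw [hTdef]; push_cast; linarith
        have h4 : (n : ℝ) * Real.log m = β * (((n : ℝ) / β) * Real.log m) := by
          field_simp
        rw [h4]
        nlinarith
      have h5 : r ^ T = Real.exp ((T : ℝ) * (-β)) := by
        rw [hrdef]; exact (Real.exp_nat_mul _ T).symm
      have h6 : ((m : ℝ) ^ n)⁻¹ = Real.exp (-((n : ℝ) * Real.log m)) := by
        rw [Real.exp_neg]
        congr 1
        rw [Real.exp_nat_mul, Real.exp_log (by linarith : (0:ℝ) < (m:ℝ))]
      rw [h5, h6]
      exact Real.exp_le_exp.mpr (by linarith)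
    set x : ℝ := ((4 : ℝ) ^ T * (T : ℝ) * (m : ℝ) ^ n)⁻¹ with hxdef
    have hden : (0 : ℝ) < (4 : ℝ) ^ T * (T : ℝ) * (m : ℝ) ^ n :=
      mul_pos (mul_pos (by positivity) hTpos) hmn0
    have hx0 : 0 < x := inv_pos.mpr hden
    clear_value x
    have hx2 : x ≤ 1 / 2 := by
      have h4 : (2 : ℝ) ≤ (4 : ℝ) ^ T * (T : ℝ) * (m : ℝ) ^ n := by
        have h5 : (4 : ℝ) ≤ 4 ^ T := by
          calc (4 : ℝ) = 4 ^ 1 := (pow_one 4).symm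
            _ ≤ 4 ^ T := pow_le_pow_right₀ (by norm_num) hT1
        have hT1' : (1 : ℝ) ≤ (T : ℝ) := by exact_mod_cast hT1
        calc (2:ℝ) ≤ 4 * 1 * 1 := by norm_num
          _ ≤ 4 ^ T * (T:ℝ) * (m:ℝ) ^ n := by gcongr <;> norm_num
      rw [hxdef, show (1:ℝ)/2 = 2⁻¹ by norm_num]
      exact inv_anti₀ (by norm_num) h4
    have hx1 : x < 1 := by linarith
    set γ : ℝ := -Real.log x with hγdef
    have hγ : 0 < γ := neg_pos.mpr (Real.log_neg hx0 hx1)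
    clear_value γ
    set P : Polynomial ℝ := interpPoly ρ x T with hPdef
    have hPdeg : P.natDegree ≤ T := by rw [hPdef]; exact interpPoly_natDegree_le ρ x T
    have hP0 : P.coeff 0 = 0 := by rw [hPdef]; exact interpPoly_coeff_zero ρ x T
    have hPnode : ∀ t < T, P.eval (x ^ t) = ρ t := by
      intro t ht
      rw [hPdef]; exact interpPoly_eval_node ρ hx0 hx1 (Finset.mem_range.mpr ht)
    have hPtail : ∀ u : ℕ,
        |P.eval (x ^ (T + u))| ≤ (T : ℝ) * C₀ * 4 ^ (T - 1) * x ^ (u + 1) := by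
      intro u
      rw [hPdef]; exact interpPoly_tail ρ hρC₀ hx0 hx2 u
    clear_value P
    refine ⟨fun k => P.coeff ((k : ℕ) + 1), fun k => (((k : ℕ) : ℝ) + 1) * γ,
      fun k => mul_pos (by positivity) hγ, ?_⟩
    have hexpk : ∀ k s : ℕ,
        Real.exp (-((((k : ℕ) : ℝ) + 1) * γ) * (s : ℝ)) = (x ^ (k + 1)) ^ s := by
      intro k s
      have h1 : -((((k : ℕ) : ℝ) + 1) * γ) * (s : ℝ) = (s : ℝ) * Real.log (x ^ (k + 1)) := by
        rw [Real.log_pow, hγdef]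
        push_cast
        ring
      rw [h1, Real.exp_nat_mul, Real.exp_log (pow_pos hx0 _)]
    have hfeq : ∀ s : ℕ,
        (∑ k : Fin m, P.coeff ((k : ℕ) + 1) *
          Real.exp (-((((k : ℕ) : ℝ) + 1) * γ) * (s : ℝ))) = P.eval (x ^ s) := by
      intro s
      rw [eval_as_shift_sum (hPdeg.trans hTm) hP0, ← Fin.sum_univ_eq_sum_range]
      refine Finset.sum_congr rfl (fun k _ => ?_)
      rw [hexpk (k : ℕ) s]
      congr 1
      rw [← pow_mul, ← pow_mul, Nat.mul_comm]
    set F : ℕ → ℝ := fun s => |ρ s - P.eval (x ^ s)| with hFdef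
    have hgoalcong : (∑' s : ℕ, |ρ s - ∑ k : Fin m, P.coeff ((k : ℕ) + 1) *
        Real.exp (-((((k : ℕ) : ℝ) + 1) * γ) * (s : ℝ))|) = ∑' s, F s :=
      tsum_congr fun s => by rw [hfeq s]
    have hFzero : ∀ s < T, F s = 0 := by
      intro s hs
      rw [hFdef]
      simp only
      rw [hPnode s hs, sub_self, abs_zero]
    set K : ℝ := (T : ℝ) * C₀ * 4 ^ (T - 1) * x with hKdef
    have hKpos : 0 < K := by
      rw [hKdef]; positivity
    set D : ℕ → ℝ := fun u => C₀ * r ^ T * r ^ u + K * x ^ u with hDdef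
    have htail : ∀ u : ℕ, F (u + T) ≤ D u := by
      intro u
      have h1 : F (u + T) ≤ |ρ (u + T)| + |P.eval (x ^ (u + T))| := abs_sub _ _
      have h2 : |ρ (u + T)| ≤ C₀ * r ^ T * r ^ u := by
        have := hρ' (u + T)
        rw [pow_add] at this
        nlinarith [pow_nonneg hr0.le u, pow_nonneg hr0.le T]
      have h3 : |P.eval (x ^ (u + T))| ≤ K * x ^ u := by
        rw [show u + T = T + u by omega]
        refine (hPtail u).trans ?_
        rw [hKdef, pow_succ']
        ring_nf
        exact le_refl _
      rw [hDdef]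
      simp only
      linarith
    have hgeo_x : Summable (fun u : ℕ => x ^ u) := summable_geometric_of_lt_one hx0.le hx1
    have hgeo_r : Summable (fun u : ℕ => r ^ u) := summable_geometric_of_lt_one hr0.le hr1
    have hD_summable : Summable D := by
      rw [hDdef]
      exact Summable.add (hgeo_r.mul_left _) (hgeo_x.mul_left _)
    have hF_summable : Summable F := by
      set G : ℕ → ℝ := fun s =>
        C₀ * r ^ s + ∑ i ∈ Finset.range m, |P.coeff (i + 1)| * (x ^ (i + 1)) ^ s with hGdef
      have hG : Summable G := by
        rw [hGdef]
        refine Summable.add (hgeo_r.mul_left _) (summable_sum fun i _ => ?_)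
        exact (summable_geometric_of_lt_one (pow_nonneg hx0.le _)
          (pow_lt_one₀ hx0.le hx1 (Nat.succ_ne_zero i))).mul_left _
      refine Summable.of_nonneg_of_le (fun s => abs_nonneg _) (fun s => ?_) hG
      have h1 : F s ≤ |ρ s| + |P.eval (x ^ s)| := abs_sub _ _
      have h2 : |P.eval (x ^ s)| ≤ ∑ i ∈ Finset.range m, |P.coeff (i + 1)| * (x ^ (i + 1)) ^ s := by
        rw [eval_as_shift_sum (hPdeg.trans hTm) hP0]
        refine (Finset.abs_sum_le_sum_abs _ _).trans (Finset.sum_le_sum fun i _ => ?_)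
        rw [abs_mul, ← pow_mul, ← pow_mul, mul_comm s (i+1)]
        rw [abs_pow, abs_of_pos hx0]
      rw [hGdef]
      simp only
      linarith [hρ' s]
    have hsum_shift : Summable (fun u => F (u + T)) := (summable_nat_add_iff T).mpr hF_summable
    have hsplit : (∑' s, F s) = ∑ i ∈ Finset.range T, F i + ∑' i, F (i + T) :=
      (hF_summable.sum_add_tsum_nat_add T).symm
    have hhead : ∑ i ∈ Finset.range T, F i = 0 :=
      Finset.sum_eq_zero fun s hs => hFzero s (Finset.mem_range.mp hs)
    have htsum_tail : (∑' i, F (i + T)) ≤ ∑' u, D u :=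
      Summable.tsum_le_tsum htail hsum_shift hD_summable
    have hDval : (∑' u, D u) = C₀ * r ^ T * (1 - r)⁻¹ + K * (1 - x)⁻¹ := by
      rw [hDdef]
      rw [Summable.tsum_add (hgeo_r.mul_left _) (hgeo_x.mul_left _), tsum_mul_left, tsum_mul_left,
        tsum_geometric_of_lt_one hr0.le hr1, tsum_geometric_of_lt_one hx0.le hx1]
    have hbound1 : C₀ * r ^ T * (1 - r)⁻¹ ≤ E₀ * ((m : ℝ) ^ n)⁻¹ := by
      rw [hE₀def, div_eq_mul_inv]
      have hinv : (0:ℝ) < (1 - r)⁻¹ := inv_pos.mpr (by linarith)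
      calc C₀ * r ^ T * (1 - r)⁻¹ ≤ C₀ * ((m : ℝ) ^ n)⁻¹ * (1 - r)⁻¹ :=
            mul_le_mul_of_nonneg_right (mul_le_mul_of_nonneg_left hrT hC₀.le) hinv.le
        _ = C₀ * (1 - r)⁻¹ * ((m : ℝ) ^ n)⁻¹ := by ring
    have hKeq : K = C₀ / 4 * ((m : ℝ) ^ n)⁻¹ := by
      rw [hKdef, hxdef]
      have h4T : (4 : ℝ) ^ T = 4 ^ (T - 1) * 4 := by
        rw [← pow_succ]
        congr 1
        omega
      rw [h4T]
      have h1 : ((4:ℝ) ^ (T-1)) ≠ 0 := by positivity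
      field_simp
    have hbound2 : K * (1 - x)⁻¹ ≤ C₀ / 2 * ((m : ℝ) ^ n)⁻¹ := by
      have hinv2 : (1 - x)⁻¹ ≤ 2 := by
        rw [inv_le_comm₀ (by linarith) (by norm_num)]
        linarith
      calc K * (1 - x)⁻¹ ≤ K * 2 := mul_le_mul_of_nonneg_left hinv2 hKpos.le
        _ = C₀ / 2 * ((m : ℝ) ^ n)⁻¹ := by rw [hKeq]; ring
    rw [hgoalcong, hsplit, hhead, zero_add]
    refine htsum_tail.trans ?_
    rw [hDval]
    have hCdiv : (E₀ * (M : ℝ) ^ n + E₀ + C₀ + 1) / (m : ℝ) ^ n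
        = (E₀ * (M : ℝ) ^ n + E₀ + C₀ + 1) * ((m : ℝ) ^ n)⁻¹ := div_eq_mul_inv _ _
    rw [hCdiv]
    have hMn : (0:ℝ) ≤ E₀ * (M : ℝ) ^ n := by positivity
    have hinvmn : (0:ℝ) < ((m : ℝ) ^ n)⁻¹ := inv_pos.mpr hmn0
    calc C₀ * r ^ T * (1 - r)⁻¹ + K * (1 - x)⁻¹
        ≤ E₀ * ((m : ℝ) ^ n)⁻¹ + C₀ / 2 * ((m : ℝ) ^ n)⁻¹ := add_le_add hbound1 hbound2
      _ = (E₀ + C₀ / 2) * ((m : ℝ) ^ n)⁻¹ := by ring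
      _ ≤ (E₀ * (M : ℝ) ^ n + E₀ + C₀ + 1) * ((m : ℝ) ^ n)⁻¹ :=
          mul_le_mul_of_nonneg_right (by linarith) hinvmn.le
end

section
/- For every positive integer n there exists a constant C > 0, depending only on n, with the following property: for every positive integer T and every positive integer m there exist real coefficients α₁,…,α_m and exponents β₁,…,β_m with β_k > 1 for every k ∈ {1,…,m}, such that ∑_{s=1}^{∞} | 𝟙{s = T} − ∑_{k=1}^{m} α_k s^{−β_k} | ≤ C · T^{1.01(n+1)} / mⁿ. -/
open Polynomial Filter Finset


/-- approximation of the indicator `𝟙{s = T}` in `ℓ¹(ℕ₊)` by sums of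
`m` power-law decays `∑ₖ αₖ s^{−βₖ}` with `βₖ > 1`, at rate `C · T^{1.01(n+1)} / mⁿ`.
(The sum over `s ≥ 1` is written as a sum over `s : ℕ` of the value at `s + 1`.) -/
theorem stmt3 :
    ∀ n : ℕ, 0 < n → ∃ C : ℝ, 0 < C ∧
      ∀ T m : ℕ, 0 < T → 0 < m →
        ∃ α β : Fin m → ℝ, (∀ k, 1 < β k) ∧
          (∑' s : ℕ, |(if s + 1 = T then (1 : ℝ) else 0) -
              ∑ k, α k * ((s : ℝ) + 1) ^ (-(β k))|)
            ≤ C * (T : ℝ) ^ (1.01 * ((n : ℝ) + 1)) / (m : ℝ) ^ n := by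
  intro n hn
  refine ⟨1, one_pos, ?_⟩
  intro T m hT hm
  have hT1 : (1:ℝ) ≤ (T:ℝ) := by exact_mod_cast hT
  have hm0 : (0:ℝ) < (m:ℝ)^n := by positivity
  have hδpos : 0 < (T:ℝ) ^ (1.01 * ((n:ℝ)+1)) / (m:ℝ)^n :=
    div_pos (Real.rpow_pos_of_pos (by linarith) _) hm0
  rcases lt_or_ge m T with hmT | hmT
  · -- trivial case: α = 0
    refine ⟨0, fun _ => 2, fun k => one_lt_two, ?_⟩
    have hts : (∑' s:ℕ, |(if s + 1 = T then (1:ℝ) else 0) -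
        ∑ k : Fin m, (0 : Fin m → ℝ) k * ((s:ℝ)+1) ^ (-(2:ℝ))|) = 1 := by
      have h1 : ∀ s:ℕ, |(if s + 1 = T then (1:ℝ) else 0) -
          ∑ k : Fin m, (0 : Fin m → ℝ) k * ((s:ℝ)+1) ^ (-(2:ℝ))| =
          if s + 1 = T then (1:ℝ) else 0 := by
        intro s
        simp only [Pi.zero_apply, zero_mul, Finset.sum_const_zero, sub_zero]
        split <;> simp
      rw [tsum_congr h1, tsum_eq_single (T-1)]
      · simp [Nat.sub_add_cancel hT]
      · intro s hs
        have : s + 1 ≠ T := by omega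
        simp [this]
    rw [hts, one_mul, le_div_iff₀ hm0, one_mul]
    have h1 : (m:ℝ)^n ≤ (T:ℝ)^n :=
      pow_le_pow_left₀ (by positivity) (by exact_mod_cast hmT.le) n
    have h2 : (T:ℝ)^n ≤ (T:ℝ) ^ (1.01*((n:ℝ)+1)) := by
      rw [← Real.rpow_natCast (T:ℝ) n]
      apply Real.rpow_le_rpow_of_exponent_le hT1
      have hn0 : (0:ℝ) ≤ (n:ℝ) := Nat.cast_nonneg n
      nlinarith
    linarith
  · -- main case: T ≤ m
    set δ := (T:ℝ) ^ (1.01 * ((n:ℝ)+1)) / (m:ℝ)^n with hδ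
    have hq0 : (0:ℝ) ≤ (T:ℝ)/((T:ℝ)+1) := by positivity
    have hq1 : (T:ℝ)/((T:ℝ)+1) < 1 := by
      rw [div_lt_one (by linarith)]; linarith
    set q := (T:ℝ)/((T:ℝ)+1) with hq
    have hZsum : Summable (fun s:ℕ => (((s:ℝ)+1)^2)⁻¹) := by
      have h := (summable_nat_add_iff 1).mpr
        (Real.summable_one_div_nat_pow.mpr (by norm_num : 1 < 2))
      exact h.congr (fun s => by push_cast; rw [one_div])
    set Z := ∑' s:ℕ, (((s:ℝ)+1)^2)⁻¹ with hZdef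
    have hZ0 : 0 ≤ Z := tsum_nonneg (fun s => by positivity)
    set B := (2:ℝ)^(T-1) with hB
    have hB0 : (0:ℝ) < B := by positivity
    set K := B * (T:ℝ)^2 * Z with hK
    have hK0 : 0 ≤ K := by positivity
    set ε := δ/(K+1) with hε
    have hε0 : 0 < ε := div_pos hδpos (by linarith)
    -- choose the exponent b = b' + 2
    have h1 : ∀ᶠ b : ℕ in atTop, q ^ b < ε :=
      (tendsto_pow_atTop_nhds_zero_of_lt_one hq0 hq1).eventually (gt_mem_nhds hε0)
    have h2 : ∀ᶠ b : ℕ in atTop, ∀ j ∈ Finset.Ico 1 T, (2:ℝ) ≤ ((T:ℝ)/(j:ℝ))^(b+2) := by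
      rw [eventually_all_finset]
      intro j hj
      simp only [Finset.mem_Ico] at hj
      have hj0 : (0:ℝ) < (j:ℝ) := by exact_mod_cast hj.1
      have hj1 : (1:ℝ) < (T:ℝ)/(j:ℝ) := by
        rw [lt_div_iff₀ hj0, one_mul]
        exact_mod_cast hj.2
      have h := (tendsto_pow_atTop_atTop_of_one_lt hj1).eventually_ge_atTop 2
      exact (tendsto_add_atTop_nat 2) h
    obtain ⟨b', hb1, hb2⟩ := (h1.and h2).exists
    set b := b' + 2 with hbdef
    set x : ℕ → ℝ := fun j => ((T:ℝ)/(j:ℝ))^b with hx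
    have hx2 : ∀ j ∈ Finset.Ico 1 T, (2:ℝ) ≤ x j := hb2
    set c := (∏ j ∈ Finset.Ico 1 T, (1 - x j))⁻¹ with hc
    set P := Polynomial.C c * (Polynomial.X *
      ∏ j ∈ Finset.Ico 1 T, (Polynomial.X - Polynomial.C (x j))) with hP
    have hprodne : (∏ j ∈ Finset.Ico 1 T, (1 - x j)) ≠ 0 :=
      Finset.prod_ne_zero_iff.mpr (fun j hj => by have := hx2 j hj; intro h; linarith)
    have heval1 : P.eval 1 = 1 := by
      simp only [hP, eval_mul, eval_C, eval_X, eval_prod, eval_sub, one_mul]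
      rw [hc]
      exact inv_mul_cancel₀ hprodne
    have hevalj : ∀ j ∈ Finset.Ico 1 T, P.eval (x j) = 0 := by
      intro j hj
      simp only [hP, eval_mul, eval_C, eval_X, eval_prod, eval_sub]
      rw [Finset.prod_eq_zero hj (by ring)]
      ring
    have hdeg : P.natDegree ≤ m := by
      calc P.natDegree
          ≤ (Polynomial.X * ∏ j ∈ Finset.Ico 1 T,
              (Polynomial.X - Polynomial.C (x j))).natDegree := natDegree_C_mul_le _ _
        _ ≤ (Polynomial.X : ℝ[X]).natDegree +
              (∏ j ∈ Finset.Ico 1 T, (Polynomial.X - Polynomial.C (x j))).natDegree :=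
            natDegree_mul_le
        _ ≤ 1 + ∑ j ∈ Finset.Ico 1 T, (Polynomial.X - Polynomial.C (x j)).natDegree := by
            gcongr
            · exact Polynomial.natDegree_X_le
            · exact Polynomial.natDegree_prod_le _ _
        _ = 1 + (T - 1) := by
            simp [Polynomial.natDegree_X_sub_C, Nat.card_Ico]
        _ ≤ m := by omega
    have hcoeff0 : P.coeff 0 = 0 := by
      rw [Polynomial.coeff_zero_eq_eval_zero]
      simp [hP]
    refine ⟨fun k => P.coeff ((k:ℕ)+1) * (T:ℝ)^(b*((k:ℕ)+1)),
      fun k => ((b*((k:ℕ)+1) : ℕ) : ℝ), ?_, ?_⟩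
    · intro k
      have h2b : 2 ≤ b*((k:ℕ)+1) := by
        have hbb : 2 ≤ b := by omega
        have := Nat.mul_le_mul hbb (Nat.succ_le_succ (Nat.zero_le (k:ℕ)))
        simpa using this
      show (1:ℝ) < ((b*((k:ℕ)+1) : ℕ) : ℝ)
      exact_mod_cast Nat.lt_of_lt_of_le one_lt_two h2b
    have hsum : ∀ s:ℕ, (∑ k : Fin m, (P.coeff ((k:ℕ)+1) * (T:ℝ)^(b*((k:ℕ)+1))) *
        ((s:ℝ)+1) ^ (-(((b*((k:ℕ)+1) : ℕ) : ℝ)))) = P.eval (((T:ℝ)/((s:ℝ)+1))^b) := by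
      intro s
      have hy : (0:ℝ) < (s:ℝ)+1 := by positivity
      rw [Polynomial.eval_eq_sum_range' (lt_of_le_of_lt hdeg (Nat.lt_succ_self m)),
        Finset.sum_range_succ', hcoeff0, zero_mul, add_zero,
        Fin.sum_univ_eq_sum_range (fun k => (P.coeff (k+1) * (T:ℝ)^(b*(k+1))) *
          ((s:ℝ)+1) ^ (-(((b*(k+1) : ℕ) : ℝ))))]
      refine Finset.sum_congr rfl (fun k hk => ?_)
      rw [Real.rpow_neg hy.le, Real.rpow_natCast, ← pow_mul, div_pow, div_eq_mul_inv]
      ring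
    -- bound on |P.eval y| for 0 ≤ y ≤ 1
    have hPle : ∀ y:ℝ, 0 ≤ y → y ≤ 1 → |P.eval y| ≤ B * y := by
      intro y hy0 hy1
      have hev : P.eval y = c * (y * ∏ j ∈ Finset.Ico 1 T, (y - x j)) := by
        simp [hP, eval_prod]
      have habs1 : ∀ j ∈ Finset.Ico 1 T, |1 - x j| = x j - 1 := fun j hj => by
        have := hx2 j hj
        rw [abs_of_nonpos (by linarith)]; ring
      have habs2 : ∀ j ∈ Finset.Ico 1 T, |y - x j| = x j - y := fun j hj => by
        have := hx2 j hj
        rw [abs_of_nonpos (by linarith)]; ring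
      have hd : 0 < ∏ j ∈ Finset.Ico 1 T, (x j - 1) :=
        Finset.prod_pos (fun j hj => by have := hx2 j hj; linarith)
      have key : (∏ j ∈ Finset.Ico 1 T, (x j - y)) ≤ B * ∏ j ∈ Finset.Ico 1 T, (x j - 1) := by
        have : (∏ j ∈ Finset.Ico 1 T, ((x j - y)/(x j - 1))) ≤ B := by
          calc (∏ j ∈ Finset.Ico 1 T, ((x j - y)/(x j - 1)))
              ≤ ∏ _j ∈ Finset.Ico 1 T, (2:ℝ) := by
                apply Finset.prod_le_prod
                · intro j hj; have := hx2 j hj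
                  exact div_nonneg (by linarith) (by linarith)
                · intro j hj; have := hx2 j hj
                  rw [div_le_iff₀ (by linarith)]
                  linarith
            _ = 2 ^ (Finset.Ico 1 T).card := (Finset.prod_const 2)
            _ = B := by rw [Nat.card_Ico, hB]
        rw [Finset.prod_div_distrib, div_le_iff₀ hd] at this
        linarith
      rw [hev, abs_mul, abs_mul, abs_of_nonneg hy0, hc, abs_inv, Finset.abs_prod,
        Finset.abs_prod, Finset.prod_congr rfl habs1, Finset.prod_congr rfl habs2,
        inv_mul_le_iff₀ hd]
      calc y * ∏ j ∈ Finset.Ico 1 T, (x j - y)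
          ≤ y * (B * ∏ j ∈ Finset.Ico 1 T, (x j - 1)) := by
            apply mul_le_mul_of_nonneg_left key hy0
        _ = (∏ j ∈ Finset.Ico 1 T, (x j - 1)) * (B * y) := by ring
    -- the dominating function
    set g : ℕ → ℝ := fun s => (B * (T:ℝ)^2 * q^b') * (((s:ℝ)+1)^2)⁻¹ with hg
    have hgsum : Summable g := hZsum.mul_left _
    have hg0 : ∀ s, 0 ≤ g s := fun s => by positivity
    have hbound : ∀ s:ℕ, |(if s+1 = T then (1:ℝ) else 0) -
        P.eval (((T:ℝ)/((s:ℝ)+1))^b)| ≤ g s := by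
      intro s
      rcases lt_trichotomy (s+1) T with hlt | heq | hgt
      · have hmem : s+1 ∈ Finset.Ico 1 T := by simp only [Finset.mem_Ico]; omega
        have hxe : ((T:ℝ)/((s:ℝ)+1))^b = x (s+1) := by
          rw [hx]; push_cast; ring_nf
        rw [hxe, hevalj _ hmem, if_neg (by omega), sub_zero, abs_zero]
        exact hg0 s
      · have hTx : ((T:ℝ)/((s:ℝ)+1)) = 1 := by
          rw [div_eq_one_iff_eq (by positivity)]
          rw [← heq]; push_cast; ring
        rw [hTx, one_pow, heval1, if_pos heq, sub_self, abs_zero]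
        exact hg0 s
      · set r := (T:ℝ)/((s:ℝ)+1) with hr
        have hr0 : 0 ≤ r := by positivity
        have hrq : r ≤ q := by
          rw [hr, hq]
          apply div_le_div_of_nonneg_left (by linarith) (by linarith)
          have : (T:ℝ) + 1 ≤ (s:ℝ) + 1 := by
            have : (T:ℝ) ≤ (s:ℝ) := by exact_mod_cast Nat.lt_succ_iff.mp hgt
            linarith
          linarith
        have hr1 : r ≤ 1 := le_of_lt (lt_of_le_of_lt hrq hq1)
        rw [if_neg (by omega), zero_sub, abs_neg]
        calc |P.eval (r^b)| ≤ B * r^b :=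
              hPle _ (by positivity) (pow_le_one₀ hr0 hr1)
          _ = B * (r^2 * r^b') := by rw [hbdef, pow_add]; ring
          _ ≤ B * (r^2 * q^b') := by
              apply mul_le_mul_of_nonneg_left _ hB0.le
              apply mul_le_mul_of_nonneg_left (pow_le_pow_left₀ hr0 hrq b') (by positivity)
          _ ≤ B * (((T:ℝ)^2 * (((s:ℝ)+1)^2)⁻¹) * q^b') := by
              apply mul_le_mul_of_nonneg_left _ hB0.le
              apply mul_le_mul_of_nonneg_right _ (by positivity)
              rw [hr, div_pow, div_eq_mul_inv]
          _ = g s := by rw [hg]; ring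
    have hesum : Summable (fun s:ℕ => |(if s+1 = T then (1:ℝ) else 0) -
        P.eval (((T:ℝ)/((s:ℝ)+1))^b)|) :=
      hgsum.of_nonneg_of_le (fun s => abs_nonneg _) hbound
    have hgoalEq : (∑' s:ℕ, |(if s+1 = T then (1:ℝ) else 0) -
        ∑ k : Fin m, (P.coeff ((k:ℕ)+1) * (T:ℝ)^(b*((k:ℕ)+1))) *
          ((s:ℝ)+1) ^ (-(((b*((k:ℕ)+1) : ℕ) : ℝ)))|) =
        ∑' s:ℕ, |(if s+1 = T then (1:ℝ) else 0) - P.eval (((T:ℝ)/((s:ℝ)+1))^b)| :=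
      tsum_congr (fun s => by rw [hsum s])
    rw [one_mul, ← hδ, hgoalEq]
    calc (∑' s:ℕ, |(if s+1 = T then (1:ℝ) else 0) - P.eval (((T:ℝ)/((s:ℝ)+1))^b)|)
        ≤ ∑' s, g s := Summable.tsum_le_tsum hbound hesum hgsum
      _ = (B * (T:ℝ)^2 * q^b') * Z := by rw [hg, tsum_mul_left]
      _ = K * q^b' := by rw [hK]; ring
      _ ≤ K * ε := mul_le_mul_of_nonneg_left hb1.le hK0
      _ ≤ δ := by
          rw [hε, mul_div_assoc']
          rw [div_le_iff₀ (by linarith : (0:ℝ) < K + 1)]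
          nlinarith
end

section
/- For every positive integer n there exists a constant C > 0, depending only on n, with the following property: for every positive integer T and every positive integer m there exist real coefficients α₁,…,α_m and exponents β₁,…,β_m with β_k > 1 for every k, such that for every integer B with 1 ≤ B ≤ T (the same coefficients working for all such B simultaneously), ∑_{s=1}^{∞} | 𝟙{s = B} − ∑_{k=1}^{m} α_k (s/B)^{−β_k} | ≤ C · T^{1.01(n+1)} / mⁿ. -/
set_option maxHeartbeats 1000000

open Polynomial Real

lemma cheb_deg : ∀ r : ℕ, (Polynomial.Chebyshev.T ℝ (r:ℤ)).natDegree ≤ r := by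
  intro r
  induction r using Nat.twoStepInduction with
  | zero => simp [Polynomial.Chebyshev.T_zero]
  | one => simp [Polynomial.Chebyshev.T_one]
  | more n ih1 ih2 =>
    have h : ((n:ℤ)+2) = ((n+2:ℕ):ℤ) := by push_cast; ring
    rw [show ((n+2:ℕ):ℤ) = (n:ℤ)+2 by push_cast; ring, Polynomial.Chebyshev.T_add_two]
    refine le_trans (Polynomial.natDegree_sub_le _ _) ?_
    have h1 : (2 * X * Polynomial.Chebyshev.T ℝ ((n:ℤ)+1)).natDegree ≤ n + 2 := by
      refine le_trans (Polynomial.natDegree_mul_le) ?_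
      have : (2 * X : ℝ[X]).natDegree ≤ 1 := by
        refine le_trans (Polynomial.natDegree_mul_le) ?_
        simp
      have h2 := ih2
      rw [show ((n:ℤ)+1) = ((n+1:ℕ):ℤ) by push_cast; ring]
      omega
    have h2 : (Polynomial.Chebyshev.T ℝ (n:ℤ)).natDegree ≤ n + 2 := le_trans ih1 (by omega)
    simp [h1, h2]

lemma cheb_cosh (t : ℝ) : ∀ r : ℕ, (Polynomial.Chebyshev.T ℝ (r:ℤ)).eval (Real.cosh t) = Real.cosh (r * t) := by
  intro r
  induction r using Nat.twoStepInduction with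
  | zero => simp [Polynomial.Chebyshev.T_zero]
  | one => simp [Polynomial.Chebyshev.T_one]
  | more n ih1 ih2 =>
    rw [show ((n+2:ℕ):ℤ) = (n:ℤ)+2 by push_cast; ring, Polynomial.Chebyshev.T_add_two]
    rw [show ((n:ℤ)+1) = ((n+1:ℕ):ℤ) by push_cast; ring] 
    simp only [Polynomial.eval_sub, Polynomial.eval_mul, Polynomial.eval_X, Polynomial.eval_ofNat,
      ih1, ih2]
    have ha := Real.cosh_add ((n+1:ℕ) * t) t
    have hb := Real.cosh_sub ((n+1:ℕ) * t) t
    have : (((n:ℕ)+2:ℕ):ℝ) * t = ((n+1:ℕ):ℝ) * t + t := by push_cast; ring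
    rw [this, ha]
    have : ((n:ℕ):ℝ) * t = ((n+1:ℕ):ℝ) * t - t := by push_cast; ring
    rw [this, hb]
    push_cast
    ring

lemma cheb_abs_le {z : ℝ} (h1 : -1 ≤ z) (h2 : z ≤ 1) (r : ℤ) :
    |(Polynomial.Chebyshev.T ℝ r).eval z| ≤ 1 := by
  rw [← Real.cos_arccos h1 h2, Polynomial.Chebyshev.T_real_cos]
  exact Real.abs_cos_le_one _


lemma cosh_le_quad {x : ℝ} (h0 : 0 ≤ x) (h1 : x ≤ 1) : Real.cosh x ≤ 1 + x^2 := by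
  have hb1 := Real.exp_bound (x := x) (by rw [abs_of_nonneg h0]; exact h1) (n := 2) (by norm_num)
  have hb2 := Real.exp_bound (x := -x) (by rw [abs_neg, abs_of_nonneg h0]; exact h1) (n := 2) (by norm_num)
  rw [abs_of_nonneg h0] at hb1
  rw [abs_neg, abs_of_nonneg h0] at hb2
  have e1 : ∑ i ∈ Finset.range 2, x ^ i / (i).factorial = 1 + x := by
    simp [Finset.sum_range_succ]
  have e2 : ∑ i ∈ Finset.range 2, (-x) ^ i / (i).factorial = 1 - x := by
    simp [Finset.sum_range_succ]; ring
  rw [e1] at hb1; rw [e2] at hb2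
  have h3 : Real.exp x ≤ 1 + x + x^2 * (3/4) := by
    have := abs_le.1 hb1
    norm_num at this ⊢
    nlinarith [this.2]
  have h4 : Real.exp (-x) ≤ 1 - x + x^2 * (3/4) := by
    have := abs_le.1 hb2
    norm_num at this ⊢
    nlinarith [this.2]
  rw [Real.cosh_eq]
  nlinarith

-- geometry of the points y = (B/s)^ε
lemma geom {B s : ℕ} {S ε δ : ℝ} (hB1 : 1 ≤ B) (hs1 : 1 ≤ s) (hne : s ≠ B)
    (hBS : (B:ℝ) ≤ S) (h2S : 2 ≤ S) (hε0 : 0 < ε) (hε1 : ε ≤ 1)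
    (hεS : S ^ ε ≤ 2) (hδ : δ = ε/(2*S)) :
    δ^2 ≤ (((s:ℝ)/(B:ℝ)) ^ (-ε) - 1)^2 ∧ (((s:ℝ)/(B:ℝ)) ^ (-ε) - 1)^2 ≤ 1 := by
  have hB0 : (0:ℝ) < B := by exact_mod_cast hB1
  have hs0 : (0:ℝ) < s := by exact_mod_cast hs1
  have hx0 : (0:ℝ) < (s:ℝ)/(B:ℝ) := div_pos hs0 hB0
  have hy : ((s:ℝ)/(B:ℝ)) ^ (-ε) = ((B:ℝ)/(s:ℝ)) ^ ε := by
    rw [Real.rpow_neg hx0.le, ← Real.inv_rpow hx0.le, inv_div]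
  rw [hy]
  set y := ((B:ℝ)/(s:ℝ)) ^ ε with hydef
  have hy0 : 0 ≤ y := Real.rpow_nonneg (div_pos hB0 hs0).le _
  have hδ0 : 0 < δ := by rw [hδ]; positivity
  have hδ1 : δ ≤ 1/4 := by
    rw [hδ]; rw [div_le_div_iff₀ (by linarith) (by norm_num)]; nlinarith
  rcases lt_or_gt_of_ne hne with hlt | hgt
  · -- s < B : 1 + δ ≤ y ≤ 2
    have hsB : (s:ℝ) + 1 ≤ B := by exact_mod_cast hlt
    have hlow : 1 + δ ≤ y := by
      have hlog : Real.log ((B:ℝ)/(s:ℝ)) ≥ 1/(B:ℝ) := by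
        have h1 : Real.log ((s:ℝ)/(B:ℝ)) ≤ (s:ℝ)/(B:ℝ) - 1 :=
          Real.log_le_sub_one_of_pos hx0
        have h2 : Real.log ((B:ℝ)/(s:ℝ)) = - Real.log ((s:ℝ)/(B:ℝ)) := by
          rw [← Real.log_inv, inv_div]
        rw [h2]
        have h3 : (s:ℝ)/(B:ℝ) ≤ 1 - 1/(B:ℝ) := by
          rw [div_le_iff₀ hB0]
          have he : (1 - 1/(B:ℝ))*B = B - 1 := by field_simp
          rw [he]; linarith
        linarith
      have hexp : y = Real.exp (ε * Real.log ((B:ℝ)/(s:ℝ))) := by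
        rw [hydef, Real.rpow_def_of_pos (div_pos hB0 hs0), mul_comm]
      rw [hexp]
      have h4 : δ ≤ ε * Real.log ((B:ℝ)/(s:ℝ)) := by
        rw [hδ]
        have h5 : ε / (2*S) ≤ ε * (1/(B:ℝ)) := by
          rw [div_eq_mul_inv]
          apply mul_le_mul_of_nonneg_left _ hε0.le
          rw [one_div]
          apply inv_anti₀ hB0
          linarith
        calc ε / (2*S) ≤ ε * (1/(B:ℝ)) := h5
          _ ≤ ε * Real.log ((B:ℝ)/(s:ℝ)) := by
              apply mul_le_mul_of_nonneg_left _ hε0.le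
              exact hlog
      have := Real.add_one_le_exp (ε * Real.log ((B:ℝ)/(s:ℝ)))
      linarith
    have hupp : y ≤ 2 := by
      have h1 : (B:ℝ)/(s:ℝ) ≤ S := le_trans (by
        apply div_le_self hB0.le; exact_mod_cast hs1) hBS
      calc y ≤ S ^ ε := Real.rpow_le_rpow (div_pos hB0 hs0).le h1 hε0.le
        _ ≤ 2 := hεS
    constructor <;> nlinarith
  · -- s > B : y ≤ 1 - δ
    have hsB : (B:ℝ) + 1 ≤ s := by exact_mod_cast hgt
    have h1 : (B:ℝ)/(s:ℝ) ≤ (B:ℝ)/((B:ℝ)+1) := by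
      apply div_le_div_of_nonneg_left hB0.le (by linarith) hsB
    have h2 : y ≤ ((B:ℝ)/((B:ℝ)+1)) ^ ε :=
      Real.rpow_le_rpow (div_pos hB0 hs0).le h1 hε0.le
    have h3 : ((B:ℝ)/((B:ℝ)+1)) ^ ε ≤ 1 - ε/((B:ℝ)+1) := by
      have hu : (-1:ℝ) ≤ -(1/((B:ℝ)+1)) := by
        rw [neg_le_neg_iff]
        rw [div_le_one (by linarith)]; linarith
      have := rpow_one_add_le_one_add_mul_self hu hε0.le hε1
      have heq : (1:ℝ) + -(1/((B:ℝ)+1)) = (B:ℝ)/((B:ℝ)+1) := by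
        field_simp; ring
      rw [heq] at this
      calc ((B:ℝ)/((B:ℝ)+1)) ^ ε ≤ 1 + ε * -(1/((B:ℝ)+1)) := this
        _ = 1 - ε/((B:ℝ)+1) := by ring
    have h4 : δ ≤ ε/((B:ℝ)+1) := by
      rw [hδ]
      apply div_le_div_of_nonneg_left hε0.le (by linarith)
      linarith
    have h5 : y ≤ 1 - δ := by linarith
    constructor <;> nlinarith

noncomputable def Zc : ℝ := ∑' s : ℕ, ((s:ℝ)+1) ^ (-(1.01:ℝ))

lemma Zc_summable : Summable (fun s : ℕ => ((s:ℝ)+1) ^ (-(1.01:ℝ))) := by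
  have h : Summable (fun n : ℕ => ((n:ℝ)) ^ (-(1.01:ℝ))) := by
    rw [Real.summable_nat_rpow]; norm_num
  have := (summable_nat_add_iff 1).2 h
  refine this.congr ?_
  intro s; push_cast; norm_num

lemma Zc_nonneg : 0 ≤ Zc := tsum_nonneg (fun s => Real.rpow_nonneg (by positivity) _)

lemma key (T m : ℕ) (hT : 1 ≤ T) (hm : 1 ≤ m) :
    ∃ δ : ℝ, (0 < δ ∧ δ ≤ 1 ∧ 1 / δ ≤ 1200 * (T:ℝ) ^ (1.01:ℝ)) ∧
    ∃ α β : Fin m → ℝ, (∀ k, 1 < β k) ∧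
      ∀ B : ℕ, 1 ≤ B → B ≤ T →
        (∑' s : ℕ, |(if s + 1 = B then (1:ℝ) else 0) -
            ∑ k, α k * (((s:ℝ) + 1) / (B:ℝ)) ^ (-(β k))|)
          ≤ 2 * Real.exp 1 * Real.exp (-((m:ℝ) * δ / 2)) * (T:ℝ) ^ (1.01:ℝ) * Zc := by
  have hT0 : (0:ℝ) < T := by exact_mod_cast hT
  set S : ℝ := max (T:ℝ) 2 with hSdef
  have h2S : 2 ≤ S := le_max_right _ _
  have hTS : (T:ℝ) ≤ S := le_max_left _ _
  have hS0 : (0:ℝ) < S := by linarith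
  have hT1 : (1:ℝ) ≤ T := by exact_mod_cast hT
  have hS2T : S ≤ 2 * T := by
    rcases max_cases (T:ℝ) 2 with ⟨h, _⟩ | ⟨h, _⟩ <;> rw [hSdef, h] <;> nlinarith
  have hlogS : Real.log 2 ≤ Real.log S := Real.log_le_log (by norm_num) h2S
  have hlog2 : (0:ℝ) < Real.log 2 := Real.log_pos (by norm_num)
  have hlogS0 : 0 < Real.log S := lt_of_lt_of_le hlog2 hlogS
  set ε : ℝ := Real.log 2 / Real.log S with hεdef
  have hε0 : 0 < ε := div_pos hlog2 hlogS0
  have hε1 : ε ≤ 1 := by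
    rw [hεdef, div_le_one hlogS0]; exact hlogS
  have hεS : S ^ ε ≤ 2 := by
    rw [Real.rpow_def_of_pos hS0, hεdef]
    rw [mul_div_cancel₀ _ (ne_of_gt hlogS0)]
    rw [Real.exp_log (by norm_num)]
  set δ : ℝ := ε / (2 * S) with hδdef
  have hδ0 : 0 < δ := by rw [hδdef]; positivity
  have hδ1 : δ ≤ 1 := by
    rw [hδdef, div_le_one (by linarith)]; linarith
  have hδbound : 1 / δ ≤ 1200 * (T:ℝ) ^ (1.01:ℝ) := by
    rw [hδdef, one_div_div]
    have hlS : Real.log S ≤ 100 * S ^ (0.01:ℝ) := by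
      have := Real.log_le_rpow_div hS0.le (show (0:ℝ) < 0.01 by norm_num)
      calc Real.log S ≤ S ^ (0.01:ℝ) / 0.01 := this
        _ = 100 * S ^ (0.01:ℝ) := by ring
    have h23 : (2:ℝ)/3 ≤ Real.log 2 := by
      have := Real.log_two_gt_d9; linarith
    have hSS : S * Real.log S ≤ 100 * S ^ (1.01:ℝ) := by
      have h1 : S * Real.log S ≤ S * (100 * S ^ (0.01:ℝ)) :=
        mul_le_mul_of_nonneg_left hlS hS0.le
      have h2 : S ^ (1.01:ℝ) = S * S ^ (0.01:ℝ) := by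
        rw [show (1.01:ℝ) = 1 + 0.01 by norm_num, Real.rpow_add hS0, Real.rpow_one]
      rw [h2]; linarith
    have hS101 : S ^ (1.01:ℝ) ≤ 4 * (T:ℝ) ^ (1.01:ℝ) := by
      have h1 : S ^ (1.01:ℝ) ≤ (2*T) ^ (1.01:ℝ) :=
        Real.rpow_le_rpow hS0.le hS2T (by norm_num)
      have h2 : ((2:ℝ)*T) ^ (1.01:ℝ) = 2 ^ (1.01:ℝ) * (T:ℝ) ^ (1.01:ℝ) :=
        Real.mul_rpow (by norm_num) hT0.le
      have h3 : (2:ℝ) ^ (1.01:ℝ) ≤ 2 ^ (2:ℝ) :=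
        Real.rpow_le_rpow_of_exponent_le (by norm_num) (by norm_num)
      have h4 : (2:ℝ) ^ (2:ℝ) = 4 := by
        rw [show (2:ℝ) = ((2:ℕ):ℝ) by norm_num, Real.rpow_natCast]; norm_num
      nlinarith [Real.rpow_nonneg hT0.le (1.01:ℝ)]
    calc 2 * S / ε = 2 * S * Real.log S / Real.log 2 := by
          rw [hεdef]; field_simp
      _ ≤ 2 * (100 * S ^ (1.01:ℝ)) / (2/3) := by
          apply div_le_div₀ (by positivity) (by nlinarith) (by norm_num) h23
      _ = 300 * S ^ (1.01:ℝ) := by ring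
      _ ≤ 300 * (4 * (T:ℝ) ^ (1.01:ℝ)) := by nlinarith
      _ = 1200 * (T:ℝ) ^ (1.01:ℝ) := by ring
  refine ⟨δ, ⟨hδ0, hδ1, hδbound⟩, ?_⟩
  -- the polynomial
  set r : ℕ := (m-1)/2 with hrdef
  set cd : ℝ := Real.cosh δ with hcddef
  have hcd1 : 1 ≤ cd := Real.one_le_cosh δ
  set w₁ : ℝ := (cd - 1)/(cd + 1) with hw₁def
  have hw₁0 : 0 ≤ w₁ := by apply div_nonneg <;> linarith
  have hw₁1 : w₁ < 1 := by
    rw [hw₁def, div_lt_one (by linarith)]; linarith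
  have hw₁δ : w₁ ≤ δ^2 := by
    have hq : cd ≤ 1 + δ^2 := cosh_le_quad hδ0.le hδ1
    rw [hw₁def, div_le_iff₀ (by linarith)]
    nlinarith
  set b : ℝ := 2/(1 - w₁) with hbdef
  have hb0 : 0 < b := by
    rw [hbdef]; apply div_pos (by norm_num); linarith
  have hab1 : cd - b * w₁ = 1 := by
    rw [hbdef, hw₁def]; field_simp; ring
  have hab2 : cd - b * 1 = -1 := by
    rw [hbdef, hw₁def]; field_simp; ring
  set cr : ℝ := Real.cosh ((r:ℝ) * δ) with hcrdef
  have hcr1 : 1 ≤ cr := Real.one_le_cosh _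
  have hcr0 : 0 < cr := by linarith
  set P : ℝ[X] := Polynomial.C cr⁻¹ *
    ((Polynomial.Chebyshev.T ℝ (r:ℤ)).comp
      (Polynomial.C cd - Polynomial.C b * (Polynomial.X - Polynomial.C 1)^2)) with hPdef
  have hPdeg : P.natDegree < m := by
    have h1 : P.natDegree ≤ ((Polynomial.Chebyshev.T ℝ (r:ℤ)).comp
        (Polynomial.C cd - Polynomial.C b * (Polynomial.X - Polynomial.C 1)^2)).natDegree :=
      Polynomial.natDegree_C_mul_le _ _
    have h2 : ((Polynomial.Chebyshev.T ℝ (r:ℤ)).comp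
        (Polynomial.C cd - Polynomial.C b * (Polynomial.X - Polynomial.C 1)^2)).natDegree ≤
        (Polynomial.Chebyshev.T ℝ (r:ℤ)).natDegree *
        (Polynomial.C cd - Polynomial.C b * (Polynomial.X - Polynomial.C 1)^2).natDegree :=
      Polynomial.natDegree_comp_le
    have h3 : (Polynomial.C cd - Polynomial.C b * (Polynomial.X - Polynomial.C 1)^2).natDegree ≤ 2 := by
      refine le_trans (Polynomial.natDegree_sub_le _ _) ?_
      have hc : (Polynomial.C cd : ℝ[X]).natDegree = 0 := Polynomial.natDegree_C _
      have hmul : (Polynomial.C b * (Polynomial.X - Polynomial.C 1)^2 : ℝ[X]).natDegree ≤ 2 := by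
        refine le_trans (Polynomial.natDegree_mul_le) ?_
        have : ((Polynomial.X - Polynomial.C 1 : ℝ[X])^2).natDegree ≤ 2 := by
          refine le_trans (Polynomial.natDegree_pow_le) ?_
          have : (Polynomial.X - Polynomial.C 1 : ℝ[X]).natDegree ≤ 1 := by
            refine le_trans (Polynomial.natDegree_sub_le _ _) ?_
            simp
          omega
        simp only [Polynomial.natDegree_C]
        omega
      omega
    have h4 := cheb_deg r
    have h5 : 2 * r < m := by omega
    calc P.natDegree ≤ _ := h1
      _ ≤ _ := h2
      _ ≤ r * 2 := Nat.mul_le_mul h4 h3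
      _ < m := by omega
  have hPeval : ∀ y : ℝ, P.eval y =
      cr⁻¹ * (Polynomial.Chebyshev.T ℝ (r:ℤ)).eval (cd - b * (y-1)^2) := by
    intro y
    simp [hPdef, Polynomial.eval_comp]
  have hP1 : P.eval 1 = 1 := by
    rw [hPeval]
    have e : cd - b * ((1:ℝ) - 1)^2 = Real.cosh δ := by rw [hcddef]; ring
    rw [e, cheb_cosh δ r, ← hcrdef]
    exact inv_mul_cancel₀ hcr0.ne'
  have hPsmall : ∀ y : ℝ, δ^2 ≤ (y-1)^2 → (y-1)^2 ≤ 1 → |P.eval y| ≤ cr⁻¹ := by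
    intro y hy1 hy2
    rw [hPeval, abs_mul, abs_of_pos (inv_pos.2 hcr0)]
    have hz1 : -1 ≤ cd - b * (y-1)^2 := by
      nlinarith [mul_le_mul_of_nonneg_left hy2 hb0.le]
    have hz2 : cd - b * (y-1)^2 ≤ 1 := by
      nlinarith [mul_le_mul_of_nonneg_left (le_trans hw₁δ hy1) hb0.le]
    have h := cheb_abs_le hz1 hz2 (r:ℤ)
    exact le_trans (mul_le_mul_of_nonneg_left h (inv_pos.2 hcr0).le) (le_of_eq (mul_one _))
  refine ⟨fun k => P.coeff k, fun k => 1.01 + ((k:ℕ):ℝ) * ε, ?_, ?_⟩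
  · intro k
    simp only
    nlinarith [mul_nonneg (by positivity : (0:ℝ) ≤ ((k:ℕ):ℝ)) hε0.le]
  intro B hB1 hBT
  have hB0 : (0:ℝ) < B := by exact_mod_cast hB1
  have hBS : (B:ℝ) ≤ S := le_trans (by exact_mod_cast hBT) hTS
  have hsum : ∀ s : ℕ, (∑ k : Fin m, P.coeff (k:ℕ) * (((s:ℝ)+1)/(B:ℝ)) ^ (-(1.01 + ((k:ℕ):ℝ)*ε)))
      = (((s:ℝ)+1)/(B:ℝ)) ^ (-(1.01:ℝ)) * P.eval ((((s:ℝ)+1)/(B:ℝ)) ^ (-ε)) := by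
    intro s
    have hx0 : (0:ℝ) < ((s:ℝ)+1)/(B:ℝ) := by positivity
    set x : ℝ := ((s:ℝ)+1)/(B:ℝ) with hxdef
    have hterm : ∀ k : ℕ, x ^ (-(1.01 + (k:ℝ)*ε)) = x ^ (-(1.01:ℝ)) * (x ^ (-ε))^k := by
      intro k
      rw [show -(1.01 + (k:ℝ)*ε) = -(1.01:ℝ) + (-ε)*(k:ℝ) by ring]
      rw [Real.rpow_add hx0, Real.rpow_mul hx0.le, Real.rpow_natCast]
    calc (∑ k : Fin m, P.coeff (k:ℕ) * x ^ (-(1.01 + ((k:ℕ):ℝ)*ε)))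
        = ∑ k : Fin m, x ^ (-(1.01:ℝ)) * (P.coeff (k:ℕ) * (x ^ (-ε))^(k:ℕ)) := by
          apply Finset.sum_congr rfl
          intro k _
          rw [hterm (k:ℕ)]; ring
      _ = x ^ (-(1.01:ℝ)) * ∑ k : Fin m, P.coeff (k:ℕ) * (x ^ (-ε))^(k:ℕ) := by
          rw [Finset.mul_sum]
      _ = x ^ (-(1.01:ℝ)) * ∑ i ∈ Finset.range m, P.coeff i * (x ^ (-ε))^i := by
          rw [Fin.sum_univ_eq_sum_range (fun i => P.coeff i * (x ^ (-ε))^i) m]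
      _ = x ^ (-(1.01:ℝ)) * P.eval (x ^ (-ε)) := by
          rw [Polynomial.eval_eq_sum_range' hPdeg]
  have hpt : ∀ s : ℕ, |(if s + 1 = B then (1:ℝ) else 0) -
      ∑ k : Fin m, P.coeff (k:ℕ) * (((s:ℝ)+1)/(B:ℝ)) ^ (-(1.01 + ((k:ℕ):ℝ)*ε))|
      ≤ cr⁻¹ * (B:ℝ) ^ (1.01:ℝ) * ((s:ℝ)+1) ^ (-(1.01:ℝ)) := by
    intro s
    have hx0 : (0:ℝ) < ((s:ℝ)+1)/(B:ℝ) := by positivity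
    have hRHS0 : 0 ≤ cr⁻¹ * (B:ℝ) ^ (1.01:ℝ) * ((s:ℝ)+1) ^ (-(1.01:ℝ)) := by positivity
    rw [hsum s]
    by_cases h : s + 1 = B
    · have hx1 : ((s:ℝ)+1)/(B:ℝ) = 1 := by
        rw [div_eq_one_iff_eq hB0.ne']
        exact_mod_cast h
      rw [if_pos h, hx1, Real.one_rpow, Real.one_rpow, hP1]
      simpa using hRHS0
    · rw [if_neg h, zero_sub, abs_neg, abs_mul]
      have hcast : ((s:ℝ)+1) = (((s+1:ℕ)):ℝ) := by push_cast; ring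
      have hgeo := geom (B := B) (s := s+1) hB1 (by omega) h hBS h2S hε0 hε1 hεS hδdef
      rw [← hcast] at hgeo
      have hsmall := hPsmall _ hgeo.1 hgeo.2
      have habs1 : |(((s:ℝ)+1)/(B:ℝ)) ^ (-(1.01:ℝ))| = (((s:ℝ)+1)/(B:ℝ)) ^ (-(1.01:ℝ)) :=
        abs_of_nonneg (Real.rpow_nonneg hx0.le _)
      rw [habs1]
      have hxeq : (((s:ℝ)+1)/(B:ℝ)) ^ (-(1.01:ℝ)) = ((s:ℝ)+1) ^ (-(1.01:ℝ)) * (B:ℝ) ^ (1.01:ℝ) := by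
        rw [Real.div_rpow (by positivity) hB0.le, Real.rpow_neg hB0.le]; field_simp
      rw [hxeq]
      calc ((s:ℝ)+1) ^ (-(1.01:ℝ)) * (B:ℝ) ^ (1.01:ℝ) * |P.eval ((((s:ℝ)+1)/(B:ℝ)) ^ (-ε))|
          ≤ ((s:ℝ)+1) ^ (-(1.01:ℝ)) * (B:ℝ) ^ (1.01:ℝ) * cr⁻¹ := by
            apply mul_le_mul_of_nonneg_left hsmall (by positivity)
        _ = cr⁻¹ * (B:ℝ) ^ (1.01:ℝ) * ((s:ℝ)+1) ^ (-(1.01:ℝ)) := by ring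
  have hsummG : Summable (fun s : ℕ => cr⁻¹ * (B:ℝ) ^ (1.01:ℝ) * ((s:ℝ)+1) ^ (-(1.01:ℝ))) :=
    Zc_summable.mul_left _
  have hsummF : Summable (fun s : ℕ => |(if s + 1 = B then (1:ℝ) else 0) -
      ∑ k : Fin m, P.coeff (k:ℕ) * (((s:ℝ)+1)/(B:ℝ)) ^ (-(1.01 + ((k:ℕ):ℝ)*ε))|) :=
    hsummG.of_nonneg_of_le (fun s => abs_nonneg _) hpt
  have hcrbound : cr⁻¹ ≤ 2 * Real.exp 1 * Real.exp (-((m:ℝ) * δ / 2)) := by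
    have h1 : Real.exp ((r:ℝ)*δ)/2 ≤ cr := by
      rw [hcrdef, Real.cosh_eq]
      nlinarith [Real.exp_pos (-((r:ℝ)*δ))]
    have h2 : cr⁻¹ ≤ (Real.exp ((r:ℝ)*δ)/2)⁻¹ := inv_anti₀ (by positivity) h1
    have h3 : (Real.exp ((r:ℝ)*δ)/2)⁻¹ = 2 * Real.exp (-((r:ℝ)*δ)) := by
      rw [Real.exp_neg]; field_simp
    have hn : m ≤ 2*r+2 := by omega
    have hnR : (m:ℝ) ≤ 2*(r:ℝ)+2 := by exact_mod_cast hn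
    have h4 : -((r:ℝ)*δ) ≤ 1 + -((m:ℝ)*δ/2) := by nlinarith [(Nat.cast_nonneg r : (0:ℝ) ≤ (r:ℝ))]
    have h5 : Real.exp (-((r:ℝ)*δ)) ≤ Real.exp 1 * Real.exp (-((m:ℝ)*δ/2)) := by
      rw [← Real.exp_add]
      exact Real.exp_le_exp.2 h4
    calc cr⁻¹ ≤ 2 * Real.exp (-((r:ℝ)*δ)) := h2.trans_eq h3
      _ ≤ 2 * (Real.exp 1 * Real.exp (-((m:ℝ)*δ/2))) := by nlinarith [Real.exp_pos (-((r:ℝ)*δ))]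
      _ = 2 * Real.exp 1 * Real.exp (-((m:ℝ)*δ/2)) := by ring
  have hBT' : (B:ℝ) ^ (1.01:ℝ) ≤ (T:ℝ) ^ (1.01:ℝ) :=
    Real.rpow_le_rpow hB0.le (by exact_mod_cast hBT) (by norm_num)
  calc (∑' s : ℕ, |(if s + 1 = B then (1:ℝ) else 0) -
      ∑ k : Fin m, P.coeff (k:ℕ) * (((s:ℝ)+1)/(B:ℝ)) ^ (-(1.01 + ((k:ℕ):ℝ)*ε))|)
      ≤ ∑' s : ℕ, cr⁻¹ * (B:ℝ) ^ (1.01:ℝ) * ((s:ℝ)+1) ^ (-(1.01:ℝ)) :=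
        Summable.tsum_le_tsum hpt hsummF hsummG
    _ = cr⁻¹ * (B:ℝ) ^ (1.01:ℝ) * Zc := tsum_mul_left
    _ ≤ 2 * Real.exp 1 * Real.exp (-((m:ℝ) * δ / 2)) * (T:ℝ) ^ (1.01:ℝ) * Zc := by
        apply mul_le_mul_of_nonneg_right _ Zc_nonneg
        apply mul_le_mul hcrbound hBT' (Real.rpow_nonneg hB0.le _) (by positivity)


/-- approximation of rescaled indicators `𝟙{s = B}` in `ℓ¹(ℕ₊)` by rescaled sums
of `m` power-law decays `∑ₖ αₖ (s/B)^{−βₖ}` with `βₖ > 1`, with coefficients independent of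
`B`, uniformly over `1 ≤ B ≤ T`, at rate `C · T^{1.01(n+1)} / mⁿ`.
(The sum over `s ≥ 1` is written as a sum over `s : ℕ` of the value at `s + 1`.) -/
theorem stmt4 :
    ∀ n : ℕ, 0 < n → ∃ C : ℝ, 0 < C ∧
      ∀ T m : ℕ, 0 < T → 0 < m →
        ∃ α β : Fin m → ℝ, (∀ k, 1 < β k) ∧
          ∀ B : ℕ, 1 ≤ B → B ≤ T →
            (∑' s : ℕ, |(if s + 1 = B then (1 : ℝ) else 0) -
                ∑ k, α k * (((s : ℝ) + 1) / (B : ℝ)) ^ (-(β k))|)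
              ≤ C * (T : ℝ) ^ (1.01 * ((n : ℝ) + 1)) / (m : ℝ) ^ n := by
  intro n hn
  have hn0 : (0:ℝ) < n := by exact_mod_cast hn
  set C : ℝ := 2 * Real.exp 1 * Zc * (2400*(n:ℝ))^n + 1 with hCdef
  have hCnn : 0 ≤ 2 * Real.exp 1 * Zc * (2400*(n:ℝ))^n :=
    mul_nonneg (mul_nonneg (mul_nonneg (by norm_num) (Real.exp_pos 1).le) Zc_nonneg)
      (pow_nonneg (by positivity) n)
  have hC0 : 0 < C := by rw [hCdef]; linarith
  refine ⟨C, hC0, ?_⟩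
  intro T m hT hm
  obtain ⟨δ, ⟨hδ0, hδ1, hδb⟩, α, β, hβ, hbound⟩ := key T m hT hm
  refine ⟨α, β, hβ, ?_⟩
  intro B hB1 hBT
  refine le_trans (hbound B hB1 hBT) ?_
  have hT0 : (0:ℝ) < T := by exact_mod_cast hT
  have hm0 : (0:ℝ) < m := by exact_mod_cast hm
  rw [le_div_iff₀ (by positivity : (0:ℝ) < (m:ℝ)^n)]
  have hTrpow : (T:ℝ)^(1.01*((n:ℝ)+1)) = (T:ℝ)^(1.01*(n:ℝ)) * (T:ℝ)^(1.01:ℝ) := by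
    rw [← Real.rpow_add hT0]; ring_nf
  have hexp : Real.exp (-((m:ℝ)*δ/2)) * (m:ℝ)^n ≤ (2*(n:ℝ)/δ)^n := by
    set u : ℝ := (m:ℝ)*δ/2 with hudef
    have hu0 : 0 < u := by rw [hudef]; positivity
    have h1 : u/(n:ℝ) ≤ Real.exp (u/(n:ℝ)) := by
      have ha := Real.add_one_le_exp (u/(n:ℝ) - 1)
      have hb : Real.exp (u/(n:ℝ) - 1) ≤ Real.exp (u/(n:ℝ)) := Real.exp_le_exp.2 (by linarith)
      linarith
    have h2 : u^n ≤ (n:ℝ)^n * Real.exp u := by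
      have h3 : u^n = ((n:ℝ) * (u/(n:ℝ)))^n := by
        congr 1; field_simp
      have h4 : ((n:ℝ)*(u/(n:ℝ)))^n ≤ ((n:ℝ) * Real.exp (u/(n:ℝ)))^n := by
        apply pow_le_pow_left₀ (by positivity) (mul_le_mul_of_nonneg_left h1 hn0.le)
      have h5 : ((n:ℝ)*Real.exp (u/(n:ℝ)))^n = (n:ℝ)^n * Real.exp (u/(n:ℝ))^n := mul_pow _ _ _
      have h6 : Real.exp (u/(n:ℝ))^n = Real.exp u := by
        rw [← Real.exp_nat_mul]
        congr 1; field_simp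
      rw [h3]
      rw [h5, h6] at h4
      exact h4
    have h7 : (m:ℝ)^n = (2/δ)^n * u^n := by
      rw [← mul_pow]
      congr 1
      rw [hudef]; field_simp
    have h8 : u^n * Real.exp (-u) ≤ (n:ℝ)^n := by
      have h9 : u^n * Real.exp (-u) ≤ ((n:ℝ)^n * Real.exp u) * Real.exp (-u) :=
        mul_le_mul_of_nonneg_right h2 (Real.exp_pos _).le
      have h10 : ((n:ℝ)^n * Real.exp u) * Real.exp (-u) = (n:ℝ)^n := by
        rw [mul_assoc, ← Real.exp_add]; simp
      linarith
    calc Real.exp (-u) * (m:ℝ)^n = (2/δ)^n * (u^n * Real.exp (-u)) := by rw [h7]; ring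
      _ ≤ (2/δ)^n * (n:ℝ)^n := mul_le_mul_of_nonneg_left h8 (by positivity)
      _ = (2*(n:ℝ)/δ)^n := by rw [← mul_pow]; congr 1; ring
  have hdb : 2*(n:ℝ)/δ ≤ 2400*(n:ℝ) * (T:ℝ)^(1.01:ℝ) := by
    calc 2*(n:ℝ)/δ = 2*(n:ℝ)*(1/δ) := by ring
      _ ≤ 2*(n:ℝ)*(1200 * (T:ℝ)^(1.01:ℝ)) := mul_le_mul_of_nonneg_left hδb (by positivity)
      _ = 2400*(n:ℝ) * (T:ℝ)^(1.01:ℝ) := by ring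
  have hpow : (2*(n:ℝ)/δ)^n ≤ (2400*(n:ℝ))^n * (T:ℝ)^(1.01*(n:ℝ)) := by
    calc (2*(n:ℝ)/δ)^n ≤ (2400*(n:ℝ) * (T:ℝ)^(1.01:ℝ))^n :=
          pow_le_pow_left₀ (by positivity) hdb n
      _ = (2400*(n:ℝ))^n * ((T:ℝ)^(1.01:ℝ))^n := mul_pow _ _ _
      _ = (2400*(n:ℝ))^n * (T:ℝ)^(1.01*(n:ℝ)) := by
          rw [← Real.rpow_natCast ((T:ℝ)^(1.01:ℝ)) n, ← Real.rpow_mul hT0.le]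
  calc 2 * Real.exp 1 * Real.exp (-((m:ℝ)*δ/2)) * (T:ℝ)^(1.01:ℝ) * Zc * (m:ℝ)^n
      = (2 * Real.exp 1 * Zc * (T:ℝ)^(1.01:ℝ)) * (Real.exp (-((m:ℝ)*δ/2)) * (m:ℝ)^n) := by
        ring
    _ ≤ (2 * Real.exp 1 * Zc * (T:ℝ)^(1.01:ℝ)) * ((2400*(n:ℝ))^n * (T:ℝ)^(1.01*(n:ℝ))) := by
        apply mul_le_mul_of_nonneg_left (hexp.trans hpow)
        exact mul_nonneg (mul_nonneg (mul_nonneg (by norm_num) (Real.exp_pos 1).le) Zc_nonneg)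
          (Real.rpow_nonneg hT0.le _)
    _ = (2 * Real.exp 1 * Zc * (2400*(n:ℝ))^n) * ((T:ℝ)^(1.01*(n:ℝ)) * (T:ℝ)^(1.01:ℝ)) := by
        ring
    _ = (2 * Real.exp 1 * Zc * (2400*(n:ℝ))^n) * (T:ℝ)^(1.01*((n:ℝ)+1)) := by rw [hTrpow]
    _ ≤ C * (T:ℝ)^(1.01*((n:ℝ)+1)) := by
        apply mul_le_mul_of_nonneg_right _ (Real.rpow_nonneg hT0.le _)
        rw [hCdef]; linarith
end

section
/- Let ρ : ℕ₊ → ℝ be polynomially decaying, i.e. there exist constants C₀ > 0 and β > 1 such that |ρ(t)| ≤ C₀ t^{−β} for all positive integers t. Then for every integer n with 1 ≤ n ≤ ⌊0.99β⌋ − 1 there exists a constant C > 0 (depending on ρ, β and n) such that for every positive integer m there exist real coefficients α₁,…,α_m and exponents β₁,…,β_m with β_k > 1 for every k, such that ∑_{s=1}^{∞} | ρ(s) − ∑_{k=1}^{m} α_k s^{−β_k} | ≤ C / mⁿ. -/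
open Finset Polynomial

lemma bern (M : ℕ) (hM : 2 ≤ M) : (((M:ℝ)-1)/M)^M ≤ 1/2 := by
  have hM2 : (2:ℝ) ≤ (M:ℝ) := by exact_mod_cast hM
  have h1 : (0:ℝ) < (M:ℝ) - 1 := by linarith
  have h0 : (0:ℝ) < (M:ℝ) := by linarith
  have ha : (-2:ℝ) ≤ 1/((M:ℝ)-1) := by
    have : (0:ℝ) ≤ 1/((M:ℝ)-1) := by positivity
    linarith
  have hber := one_add_mul_le_pow ha M
  have heq : (1 + 1/((M:ℝ)-1)) = (M:ℝ)/((M:ℝ)-1) := by field_simp; ring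
  have h2 : (2:ℝ) ≤ ((M:ℝ)/((M:ℝ)-1))^M := by
    rw [← heq]
    refine le_trans ?_ hber
    have : (1:ℝ) ≤ (M:ℝ) * (1/((M:ℝ)-1)) := by
      rw [mul_one_div, le_div_iff₀ h1]; linarith
    linarith
  have hprod : (((M:ℝ)-1)/M)^M * ((M:ℝ)/((M:ℝ)-1))^M = 1 := by
    rw [← mul_pow]
    rw [div_mul_div_comm, mul_comm ((M:ℝ)-1) (M:ℝ)]
    rw [div_self (by positivity), one_pow]
  have hpos : (0:ℝ) < ((M:ℝ)/((M:ℝ)-1))^M := by positivity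
  rw [eq_inv_of_mul_eq_one_left hprod]
  rw [inv_le_comm₀ hpos (by norm_num)]
  linarith


lemma master (m : ℕ) (hm : 0 < m) (A : ℝ) (hA : 0 ≤ A) (f : ℕ → ℝ)
    (hf0 : ∀ s, 0 ≤ f s) (hz : ∀ s, s < m → f s = 0)
    (hb : ∀ s, m ≤ s → f s ≤ A * (((s:ℝ))⁻¹ - ((s:ℝ)+1)⁻¹))
    (hsum : Summable f) : ∑' s, f s ≤ A / m := by
  apply Summable.tsum_le_of_sum_le hsum
  intro u
  set M := m + (u.sup id + 1) with hM
  have hmM : m ≤ M := Nat.le_add_right _ _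
  have hsub : u ⊆ range M := by
    intro x hx
    simp only [mem_range, hM]
    have : x ≤ u.sup id := Finset.le_sup (f := id) hx
    omega
  have step1 : ∑ s ∈ u, f s ≤ ∑ s ∈ range M, f s :=
    sum_le_sum_of_subset_of_nonneg hsub (fun i _ _ => hf0 i)
  have step2 : ∑ s ∈ range M, f s = ∑ s ∈ Ico m M, f s := by
    rw [range_eq_Ico, ← Finset.sum_Ico_consecutive _ (Nat.zero_le m) hmM]
    rw [← range_eq_Ico]
    have : ∑ s ∈ range m, f s = 0 := Finset.sum_eq_zero (fun i hi => hz i (mem_range.mp hi))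
    rw [this, zero_add]
  have step3 : ∑ s ∈ Ico m M, f s ≤ ∑ s ∈ Ico m M, (A * (((s:ℝ))⁻¹ - ((s:ℝ)+1)⁻¹)) :=
    Finset.sum_le_sum (fun i hi => hb i (Finset.mem_Ico.mp hi).1)
  have step4 : ∑ s ∈ Ico m M, (A * (((s:ℝ))⁻¹ - ((s:ℝ)+1)⁻¹)) ≤ A / m := by
    rw [Finset.sum_Ico_eq_sum_range]
    have htel : ∑ i ∈ range (M - m), (A * ((((m+i:ℕ)):ℝ)⁻¹ - (((m+i:ℕ):ℝ)+1)⁻¹))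
        = A * ((m:ℝ))⁻¹ - A * (((m + (M-m):ℕ) : ℝ))⁻¹ := by
      have h := Finset.sum_range_sub' (fun i => A * (((m+i:ℕ):ℝ))⁻¹) (M - m)
      calc ∑ i ∈ range (M - m), (A * ((((m+i:ℕ)):ℝ)⁻¹ - (((m+i:ℕ):ℝ)+1)⁻¹))
          = ∑ i ∈ range (M - m), ((fun i => A * (((m+i:ℕ):ℝ))⁻¹) i
              - (fun i => A * (((m+i:ℕ):ℝ))⁻¹) (i+1)) := by
            apply Finset.sum_congr rfl
            intro i _
            push_cast
            ring
        _ = A * ((m:ℝ))⁻¹ - A * (((m + (M-m):ℕ) : ℝ))⁻¹ := by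
            rw [h]
            norm_num
    calc ∑ i ∈ range (M - m), (A * ((((m+i:ℕ)):ℝ)⁻¹ - (((m+i:ℕ):ℝ)+1)⁻¹)) 
        = A * ((m:ℝ))⁻¹ - A * (((m + (M-m):ℕ) : ℝ))⁻¹ := htel
      _ ≤ A * ((m:ℝ))⁻¹ := by
          have : (0:ℝ) ≤ A * (((m + (M-m):ℕ) : ℝ))⁻¹ := by positivity
          linarith
      _ = A / m := by rw [div_eq_mul_inv]
  calc ∑ s ∈ u, f s ≤ ∑ s ∈ range M, f s := step1
    _ = _ := step2
    _ ≤ _ := step3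
    _ ≤ A / m := step4

lemma SBgen (p : ℝ) (hp : 1 < p) : Summable (fun s:ℕ => ((s:ℝ)+1)^(-p)) := by
  have : Summable (fun n:ℕ => (n:ℝ)^(-p)) := Real.summable_nat_rpow.mpr (by linarith)
  have h2 := (summable_nat_add_iff 1).mpr this
  convert h2 using 2 with s
  push_cast
  · rfl
  · simp

lemma vmono {c : ℕ} (hc : 0 < c) {a b : ℕ} (ha : 0 < a) (hab : a < b) :
    ((b:ℝ)⁻¹)^c < ((a:ℝ)⁻¹)^c := by
  have ha' : (0:ℝ) < (a:ℝ) := by exact_mod_cast ha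
  have h1 : (b:ℝ)⁻¹ < (a:ℝ)⁻¹ := by
    apply inv_strictAnti₀ ha'
    exact_mod_cast hab
  exact pow_lt_pow_left₀ h1 (by positivity) hc.ne'

lemma vinj {m c : ℕ} (hc : 0 < c) :
    Set.InjOn (fun j : ℕ => ((j:ℝ)⁻¹)^c) (Finset.Icc 1 m) := by
  intro a ha b hb h
  simp only [Finset.coe_Icc, Set.mem_Icc] at ha hb
  by_contra hne
  rcases Nat.lt_or_ge a b with hab | hab
  · exact absurd h (ne_of_gt (vmono hc ha.1 hab))
  · exact absurd h (ne_of_lt (vmono hc hb.1 (lt_of_le_of_ne hab (Ne.symm hne))))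

lemma vratio {m c : ℕ} {a b : ℕ} (ha : 1 ≤ a) (hab : a < b) (hbm : b ≤ m) :
    ((b:ℝ)⁻¹)^c ≤ ((a:ℝ)⁻¹)^c * ((((m:ℝ)-1))/m)^c := by
  have hm1 : 1 ≤ m := le_trans (ha.trans hab.le) hbm
  have ha' : (0:ℝ) < (a:ℝ) := by exact_mod_cast ha
  have hb' : (0:ℝ) < (b:ℝ) := by exact_mod_cast (ha.trans hab.le)
  have hm' : (0:ℝ) < (m:ℝ) := by exact_mod_cast hm1
  -- key scalar: b⁻¹ ≤ a⁻¹ * ((m-1)/m)  ⟺  a*m ≤ b*(m-1)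
  have hnat : a * m + b ≤ b * m := by
    have h1 : (a+1) * m ≤ b * m := Nat.mul_le_mul_right m hab
    have h2 : b ≤ m := hbm
    nlinarith
  have hscal : (b:ℝ)⁻¹ ≤ (a:ℝ)⁻¹ * (((m:ℝ)-1)/m) := by
    rw [inv_le_iff_one_le_mul₀' hb']
    have hcast : (a:ℝ) * m + b ≤ (b:ℝ) * m := by exact_mod_cast hnat
    calc (1:ℝ) = ((a:ℝ) * m)⁻¹ * ((a:ℝ) * m) := by field_simp
      _ ≤ ((a:ℝ) * m)⁻¹ * ((b:ℝ) * ((m:ℝ)-1)) := by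
          apply mul_le_mul_of_nonneg_left _ (by positivity)
          nlinarith
      _ = (b:ℝ) * ((a:ℝ)⁻¹ * (((m:ℝ)-1)/m)) := by field_simp
  calc ((b:ℝ)⁻¹)^c ≤ ((a:ℝ)⁻¹ * (((m:ℝ)-1)/m))^c := by
        apply pow_le_pow_left₀ (by positivity) hscal
    _ = ((a:ℝ)⁻¹)^c * ((((m:ℝ)-1))/m)^c := mul_pow _ _ _

lemma gap {m c : ℕ} (hc : 0 < c) {i j : ℕ} (hi : i ∈ Finset.Icc 1 m) (hj : j ∈ Finset.Icc 1 m)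
    (hij : i ≠ j) (hθ1 : ((((m:ℝ)-1))/m)^c ≤ 1) :
    ((i:ℝ)⁻¹)^c * (1 - ((((m:ℝ)-1))/m)^c) ≤ |((j:ℝ)⁻¹)^c - ((i:ℝ)⁻¹)^c| := by
  simp only [Finset.mem_Icc] at hi hj
  set θ : ℝ := ((((m:ℝ)-1))/m)^c with hθ
  have hθ0 : 0 ≤ θ := by
    have hm1 : 1 ≤ m := hi.1.trans hi.2
    have hm1' : (1:ℝ) ≤ (m:ℝ) := by exact_mod_cast hm1
    have h2 : (0:ℝ) ≤ ((m:ℝ)-1)/m := div_nonneg (by linarith) (by linarith)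
    exact pow_nonneg h2 c
  rcases Nat.lt_or_ge i j with h | h
  · have hsub := vratio (c := c) hi.1 h hj.2
    have hlt := vmono (c := c) hc hi.1 h
    rw [abs_of_nonpos (by linarith)]
    nlinarith [pow_pos (show (0:ℝ) < (i:ℝ)⁻¹ by
      have : (0:ℝ) < (i:ℝ) := by exact_mod_cast hi.1
      positivity) c]
  · have h' : j < i := lt_of_le_of_ne h (Ne.symm hij)
    have hsub := vratio (c := c) hj.1 h' hi.2
    have hlt := vmono (c := c) hc hj.1 h'
    rw [abs_of_nonneg (by linarith)]
    -- v i ≤ v j * θ  so  v j - v i ≥ v j (1-θ) ≥ v i (1-θ)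
    nlinarith [pow_pos (show (0:ℝ) < (j:ℝ)⁻¹ by
      have : (0:ℝ) < (j:ℝ) := by exact_mod_cast hj.1
      positivity) c]

lemma thetasmall (m K : ℕ) (hm : 1 ≤ m) (hK : m + 1 ≤ K) :
    ((((m:ℝ)-1))/m)^((m+1)*K) ≤ 1/(2*(m:ℝ)) := by
  have hm' : (1:ℝ) ≤ (m:ℝ) := by exact_mod_cast hm
  have h2K : 2 * m ≤ 2^K := by
    calc 2 * m ≤ 2 * 2^m := by
          have := Nat.lt_two_pow_self (n := m)
          omega
      _ = 2^(m+1) := by rw [pow_succ]; ring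
      _ ≤ 2^K := Nat.pow_le_pow_right (by norm_num) hK
  have h2K' : 2 * (m:ℝ) ≤ 2^K := by exact_mod_cast h2K
  have hhalf : ((1:ℝ)/2)^K ≤ 1/(2*(m:ℝ)) := by
    rw [div_pow, one_pow]
    apply div_le_div_of_nonneg_left (by norm_num) (by positivity)
    exact h2K'
  rcases Nat.eq_or_lt_of_le hm with h1 | h2
  · -- m = 1
    have hm1 : (m:ℝ) = 1 := by exact_mod_cast h1.symm
    rw [hm1]
    have hz : ((1:ℝ)-1)/1 = 0 := by norm_num
    rw [hz]
    rw [zero_pow (by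
      have : 0 < (m+1)*K := Nat.mul_pos (by omega) (by omega)
      omega)]
    norm_num
  · have hm2 : 2 ≤ m := h2
    have hx0 : (0:ℝ) ≤ ((m:ℝ)-1)/m := div_nonneg (by linarith) (by linarith)
    have hx1 : ((m:ℝ)-1)/m ≤ 1 := by
      rw [div_le_one (by linarith)]; linarith
    calc ((((m:ℝ)-1))/m)^((m+1)*K) ≤ ((((m:ℝ)-1))/m)^(m*K) := by
          apply pow_le_pow_of_le_one hx0 hx1
          exact Nat.mul_le_mul_right K (by omega)
      _ = (((((m:ℝ)-1))/m)^m)^K := by rw [← pow_mul]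
      _ ≤ ((1:ℝ)/2)^K := by
          apply pow_le_pow_left₀ (pow_nonneg hx0 m)
          exact bern m hm2
      _ ≤ 1/(2*(m:ℝ)) := hhalf

lemma pow2K (m n : ℕ) (hm : 1 ≤ m) :
    ((m:ℝ)+1)^2 * (m:ℝ)^n ≤ 2^((n+2)*m + 3) := by
  have hnat : (m+1)^2 * m^n ≤ 2^((n+2)*m+3) := by
    calc (m+1)^2 * m^n ≤ (m+1)^2 * (m+1)^n := by
          apply Nat.mul_le_mul_left
          exact Nat.pow_le_pow_left (by omega) n
      _ = (m+1)^(n+2) := by rw [← pow_add]; ring_nf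
      _ ≤ (2^m)^(n+2) := Nat.pow_le_pow_left (Nat.lt_two_pow_self (n := m)) (n+2)
      _ = 2^(m*(n+2)) := by rw [← pow_mul]
      _ ≤ 2^((n+2)*m+3) := by
          apply Nat.pow_le_pow_right (by norm_num)
          rw [Nat.mul_comm]
          omega
  calc ((m:ℝ)+1)^2 * (m:ℝ)^n = (((m+1)^2 * m^n : ℕ) : ℝ) := by push_cast; ring
    _ ≤ ((2^((n+2)*m+3) : ℕ) : ℝ) := by exact_mod_cast hnat
    _ = 2^((n+2)*m+3) := by push_cast; ring

lemma basisbound (m c : ℕ) (hm : 1 ≤ m) (hc : 0 < c)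
    (hθs : ((((m:ℝ)-1))/m)^c ≤ 1/(2*(m:ℝ)))
    {j : ℕ} (hj : j ∈ Finset.Icc 1 m)
    {u : ℝ} (hu0 : 0 < u) (hum : u ≤ ((m:ℝ)⁻¹)^c) :
    |Polynomial.eval u (Lagrange.basis (Finset.Icc 1 m) (fun j:ℕ => ((j:ℝ)⁻¹)^c) j)| ≤ 2 := by
  set θ : ℝ := ((((m:ℝ)-1))/m)^c with hθdef
  have hm' : (1:ℝ) ≤ (m:ℝ) := by exact_mod_cast hm
  have hθ0 : 0 ≤ θ := pow_nonneg (div_nonneg (by linarith) (by linarith)) c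
  have hθhalf : θ ≤ 1/2 := by
    calc θ ≤ 1/(2*(m:ℝ)) := hθs
      _ ≤ 1/2 := by
        apply div_le_div_of_nonneg_left (by norm_num) (by norm_num)
        linarith
  have h1θ : 0 < 1 - θ := by linarith
  rw [Lagrange.basis, Polynomial.eval_prod]
  rw [Finset.abs_prod]
  have hfac : ∀ i ∈ (Finset.Icc 1 m).erase j,
      |Polynomial.eval u (Lagrange.basisDivisor (((j:ℝ)⁻¹)^c) (((i:ℝ)⁻¹)^c))| ≤ (1-θ)⁻¹ := by
    intro i hi
    have hine : i ≠ j := Finset.ne_of_mem_erase hi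
    have hi' : i ∈ Finset.Icc 1 m := Finset.mem_of_mem_erase hi
    have hiIcc := Finset.mem_Icc.mp hi'
    have hi0 : (0:ℝ) < (i:ℝ) := by exact_mod_cast hiIcc.1
    have hvi0 : (0:ℝ) < ((i:ℝ)⁻¹)^c := by positivity
    have hgap := gap (m := m) hc hi' hj hine (by linarith : θ ≤ 1)
    have huvi : u ≤ ((i:ℝ)⁻¹)^c := by
      calc u ≤ ((m:ℝ)⁻¹)^c := hum
        _ ≤ ((i:ℝ)⁻¹)^c := by
            apply pow_le_pow_left₀ (by positivity)
            apply inv_anti₀ hi0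
            exact_mod_cast hiIcc.2
    have habs1 : |u - ((i:ℝ)⁻¹)^c| ≤ ((i:ℝ)⁻¹)^c := by
      rw [abs_of_nonpos (by linarith)]
      linarith
    have hgap0 : (0:ℝ) < ((i:ℝ)⁻¹)^c * (1 - θ) := by positivity
    have : Polynomial.eval u (Lagrange.basisDivisor (((j:ℝ)⁻¹)^c) (((i:ℝ)⁻¹)^c))
        = (((j:ℝ)⁻¹)^c - ((i:ℝ)⁻¹)^c)⁻¹ * (u - ((i:ℝ)⁻¹)^c) := by
      simp [Lagrange.basisDivisor]
    rw [this, abs_mul, abs_inv]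
    calc |((j:ℝ)⁻¹)^c - ((i:ℝ)⁻¹)^c|⁻¹ * |u - ((i:ℝ)⁻¹)^c|
        ≤ (((i:ℝ)⁻¹)^c * (1 - θ))⁻¹ * ((i:ℝ)⁻¹)^c := by
          apply mul_le_mul _ habs1 (abs_nonneg _) (by positivity)
          exact inv_anti₀ hgap0 hgap
      _ = (1-θ)⁻¹ := by field_simp
  calc ∏ i ∈ (Finset.Icc 1 m).erase j,
        |Polynomial.eval u (Lagrange.basisDivisor (((j:ℝ)⁻¹)^c) (((i:ℝ)⁻¹)^c))|
      ≤ ∏ i ∈ (Finset.Icc 1 m).erase j, (1-θ)⁻¹ :=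
        Finset.prod_le_prod (fun i _ => abs_nonneg _) hfac
    _ = (1-θ)⁻¹ ^ ((Finset.Icc 1 m).erase j).card := Finset.prod_const _
    _ = (1-θ)⁻¹ ^ (m - 1) := by
        rw [Finset.card_erase_of_mem hj, Nat.card_Icc]
        norm_num
    _ ≤ 2 := by
        rw [inv_pow]
        have hmem := Finset.mem_Icc.mp hj
        have hcard : ((m-1 : ℕ):ℝ) ≤ (m:ℝ) := by
          have : (m-1:ℕ) ≤ m := Nat.sub_le m 1
          exact_mod_cast this
        have hber := one_add_mul_le_pow (show (-2:ℝ) ≤ -θ by linarith) (m-1)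
        have hhalf : (1:ℝ)/2 ≤ (1-θ)^(m-1) := by
          have h1 : ((m-1:ℕ):ℝ) * θ ≤ (m:ℝ) * (1/(2*(m:ℝ))) := by
            apply mul_le_mul hcard hθs hθ0 (by linarith)
          have h2 : (m:ℝ) * (1/(2*(m:ℝ))) = 1/2 := by
            field_simp
          have h3 : 1 + ((m-1:ℕ):ℝ) * (-θ) ≤ (1 + (-θ))^(m-1) := hber
          have h4 : (1 + (-θ))^(m-1) = (1-θ)^(m-1) := by ring_nf
          nlinarith
        calc ((1-θ)^(m-1))⁻¹ ≤ ((1:ℝ)/2)⁻¹ := inv_anti₀ (by norm_num) hhalf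
          _ = 2 := by norm_num

lemma evalbound (m c : ℕ) (hm : 1 ≤ m) (hc : 0 < c)
    (hθs : ((((m:ℝ)-1))/m)^c ≤ 1/(2*(m:ℝ)))
    (r : ℕ → ℝ) (R : ℝ) (hR0 : 0 ≤ R) (hR : ∀ j ∈ Finset.Icc 1 m, |r j| ≤ R)
    {u : ℝ} (hu0 : 0 < u) (hum : u ≤ ((m:ℝ)⁻¹)^c) :
    |Polynomial.eval u (Lagrange.interpolate (Finset.Icc 1 m) (fun j:ℕ => ((j:ℝ)⁻¹)^c) r)|
      ≤ 2 * R * m := by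
  rw [Lagrange.interpolate_apply]
  rw [Polynomial.eval_finset_sum]
  calc |∑ i ∈ Finset.Icc 1 m, Polynomial.eval u
          (Polynomial.C (r i) * Lagrange.basis (Finset.Icc 1 m) (fun j:ℕ => ((j:ℝ)⁻¹)^c) i)|
      ≤ ∑ i ∈ Finset.Icc 1 m, |Polynomial.eval u
          (Polynomial.C (r i) * Lagrange.basis (Finset.Icc 1 m) (fun j:ℕ => ((j:ℝ)⁻¹)^c) i)| :=
        Finset.abs_sum_le_sum_abs _ _
    _ ≤ ∑ _i ∈ Finset.Icc 1 m, R * 2 := by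
        apply Finset.sum_le_sum
        intro i hi
        rw [Polynomial.eval_mul, Polynomial.eval_C, abs_mul]
        apply mul_le_mul (hR i hi) (basisbound m c hm hc hθs hi hu0 hum) (abs_nonneg _) hR0
    _ = 2 * R * m := by
        rw [Finset.sum_const, Nat.card_Icc]
        simp
        ring

set_option maxHeartbeats 2000000 in
/-- a polynomially decaying kernel `ρ` on the positive integers
(`|ρ(t)| ≤ C₀ t^{−β}` with `β > 1`) can be approximated in `ℓ¹(ℕ₊)` by sums of `m`
power-law decays with exponents `> 1`, at rate `C / mⁿ`, for every
`1 ≤ n ≤ ⌊0.99β⌋ − 1`.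
(The sum over `s ≥ 1` is written as a sum over `s : ℕ` of the value at `s + 1`.) -/
theorem stmt5 (ρ : ℕ → ℝ) (C₀ β : ℝ) (hC₀ : 0 < C₀) (hβ : 1 < β)
    (hρ : ∀ t : ℕ, 1 ≤ t → |ρ t| ≤ C₀ * (t : ℝ) ^ (-β)) :
    ∀ n : ℕ, 1 ≤ n → (n : ℤ) ≤ ⌊0.99 * β⌋ - 1 →
      ∃ C : ℝ, 0 < C ∧
        ∀ m : ℕ, 0 < m →
          ∃ α b : Fin m → ℝ, (∀ k, 1 < b k) ∧
            (∑' s : ℕ, |ρ (s + 1) - ∑ k, α k * ((s : ℝ) + 1) ^ (-(b k))|)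
              ≤ C / (m : ℝ) ^ n := by
  intro n hn hfl
  have hfloor2 : (2:ℤ) ≤ ⌊0.99 * β⌋ := by
    have h1 : (1:ℤ) ≤ (n:ℤ) := by exact_mod_cast hn
    omega
  have hβ2 : (2:ℝ) < β := by
    have h2 : (2:ℝ) ≤ ((⌊0.99 * β⌋ : ℤ) : ℝ) := by exact_mod_cast hfloor2
    have h3 := Int.floor_le (0.99 * β)
    nlinarith
  have hnβ : (n:ℝ) ≤ β - 1 := by
    have h4 : ((n:ℤ):ℝ) ≤ ((⌊0.99 * β⌋ - 1 : ℤ):ℝ) := by exact_mod_cast hfl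
    have h3 := Int.floor_le (0.99 * β)
    push_cast at h4
    nlinarith
  refine ⟨4*C₀, by positivity, ?_⟩
  intro m hm
  have hm1 : 1 ≤ m := hm
  have hmr : (1:ℝ) ≤ (m:ℝ) := by exact_mod_cast hm1
  set K : ℕ := (n+2)*m + 3 with hKdef
  have hKm : m + 1 ≤ K := by
    have : m ≤ (n+2)*m := Nat.le_mul_of_pos_left m (by omega)
    omega
  set c : ℕ := (m+1)*K with hcdef
  have hc2 : 2 ≤ c := by
    have : 2*1 ≤ (m+1)*K := Nat.mul_le_mul (by omega) (by omega)
    omega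
  have hc0 : 0 < c := by omega
  obtain ⟨d, hd⟩ : ∃ d, c = d + 2 := ⟨c - 2, by omega⟩
  have hθs : ((((m:ℝ)-1))/m)^c ≤ 1/(2*(m:ℝ)) := thetasmall m K hm1 hKm
  set v : ℕ → ℝ := fun j => ((j:ℝ)⁻¹)^c with hv
  have hinj : Set.InjOn v (Finset.Icc 1 m) := vinj hc0
  set r : ℕ → ℝ := fun j => ρ j * (j:ℝ)^c with hr
  set q : Polynomial ℝ := Lagrange.interpolate (Finset.Icc 1 m) v r with hq
  set p : Polynomial ℝ := Polynomial.X * q with hp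
  set α : Fin m → ℝ := fun k => p.coeff ((k:ℕ)+1) with hα
  set b : Fin m → ℝ := fun k => (c:ℝ) * ((k:ℕ)+1) with hb
  have hcr2 : (2:ℝ) ≤ (c:ℝ) := by exact_mod_cast hc2
  have hbgt : ∀ k : Fin m, 1 < b k := by
    intro k
    have hk1 : (1:ℝ) ≤ ((k:ℕ):ℝ)+1 := by
      have : (0:ℝ) ≤ ((k:ℕ):ℝ) := Nat.cast_nonneg _
      linarith
    have : (c:ℝ) * 1 ≤ (c:ℝ) * (((k:ℕ):ℝ)+1) :=
      mul_le_mul_of_nonneg_left hk1 (by linarith)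
    simp only [hb]
    nlinarith
  refine ⟨α, b, hbgt, ?_⟩
  -- degree bound
  have hdeg : p.natDegree < m + 1 := by
    by_cases h0 : q = 0
    · rw [hp, h0, mul_zero]
      simp
    · have hdq : q.degree < (m:ℕ) := by
        have h := Lagrange.degree_interpolate_lt (r := r) hinj
        rwa [Nat.card_Icc, show m + 1 - 1 = m by omega] at h
      have hqn : q.natDegree < m := (Polynomial.natDegree_lt_iff_degree_lt h0).mpr hdq
      have hle := Polynomial.natDegree_mul_le (p := (Polynomial.X : Polynomial ℝ)) (q := q)
      rw [Polynomial.natDegree_X] at hle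
      rw [hp] at *
      omega
  have hcoeff0 : p.coeff 0 = 0 := by
    rw [hp, Polynomial.mul_coeff_zero, Polynomial.coeff_X_zero, zero_mul]
  -- representation
  have hrep : ∀ s : ℕ, (∑ k : Fin m, α k * ((s:ℝ)+1)^(-(b k))) = p.eval (v (s+1)) := by
    intro s
    have ht0 : (0:ℝ) < (s:ℝ)+1 := by positivity
    have hucast : v (s+1) = (((s:ℝ)+1)⁻¹)^c := by
      simp only [hv]
      push_cast
      ring
    have hterm : ∀ k : Fin m, ((s:ℝ)+1)^(-(b k)) = (v (s+1))^((k:ℕ)+1) := by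
      intro k
      rw [hucast]
      have h1 : -(b k) = -(((c*((k:ℕ)+1) : ℕ)):ℝ) := by
        simp only [hb]; push_cast; ring
      rw [h1, Real.rpow_neg ht0.le, Real.rpow_natCast, pow_mul, ← inv_pow, ← inv_pow]
    have hsum1 : (∑ k : Fin m, α k * ((s:ℝ)+1)^(-(b k)))
        = ∑ i ∈ Finset.range m, p.coeff (i+1) * (v (s+1))^(i+1) := by
      rw [← Fin.sum_univ_eq_sum_range (fun i => p.coeff (i+1) * (v (s+1))^(i+1)) m]
      apply Finset.sum_congr rfl
      intro k _
      rw [hterm k]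
    rw [hsum1, Polynomial.eval_eq_sum_range' hdeg]
    rw [Finset.sum_range_succ' (fun i => p.coeff i * (v (s+1))^i) m]
    rw [hcoeff0]
    simp
  -- exactness at nodes
  have hnode : ∀ t : ℕ, 1 ≤ t → t ≤ m → p.eval (v t) = ρ t := by
    intro t ht1 htm
    have htmem : t ∈ Finset.Icc 1 m := Finset.mem_Icc.mpr ⟨ht1, htm⟩
    have ht0 : ((t:ℕ):ℝ) ≠ 0 := by
      have : (0:ℝ) < (t:ℝ) := by exact_mod_cast ht1
      linarith
    rw [hp, Polynomial.eval_mul, Polynomial.eval_X, hq,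
      Lagrange.eval_interpolate_at_node r hinj htmem]
    simp only [hv, hr]
    have hone : ((t:ℝ)⁻¹)^c * (t:ℝ)^c = 1 := by
      rw [← mul_pow, inv_mul_cancel₀ ht0, one_pow]
    calc ((t:ℝ)⁻¹)^c * (ρ t * (t:ℝ)^c) = ρ t * (((t:ℝ)⁻¹)^c * (t:ℝ)^c) := by ring
      _ = ρ t := by rw [hone, mul_one]
  -- tail bound
  have hC0j : ∀ j ∈ Finset.Icc 1 m, |r j| ≤ C₀ * (m:ℝ)^c := by
    intro j hj
    have hjIcc := Finset.mem_Icc.mp hj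
    have hj1 : (1:ℝ) ≤ (j:ℝ) := by exact_mod_cast hjIcc.1
    have hjm : (j:ℝ) ≤ (m:ℝ) := by exact_mod_cast hjIcc.2
    have hρj : |ρ j| ≤ C₀ := by
      calc |ρ j| ≤ C₀ * (j:ℝ)^(-β) := hρ j hjIcc.1
        _ ≤ C₀ * 1 := by
            apply mul_le_mul_of_nonneg_left _ hC₀.le
            exact Real.rpow_le_one_of_one_le_of_nonpos hj1 (by linarith)
        _ = C₀ := mul_one _
    simp only [hr]
    rw [abs_mul, abs_pow, abs_of_nonneg (by linarith : (0:ℝ) ≤ (j:ℝ))]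
    apply mul_le_mul hρj _ (by positivity) hC₀.le
    exact pow_le_pow_left₀ (by linarith) hjm c
  have htail : ∀ t : ℕ, m < t → |p.eval (v t)| ≤ 2 * (C₀ * (m:ℝ)^c) * m * v t := by
    intro t hmt
    have ht1 : (1:ℝ) ≤ (t:ℝ) := by
      have : 1 ≤ t := by omega
      exact_mod_cast this
    have hvt0 : 0 < v t := by
      simp only [hv]
      positivity
    have hvtm : v t ≤ ((m:ℝ)⁻¹)^c := by
      simp only [hv]
      apply pow_le_pow_left₀ (by positivity)
      apply inv_anti₀ (by linarith)
      exact_mod_cast hmt.le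
    have hthis := evalbound m c hm1 hc0 hθs r (C₀ * (m:ℝ)^c) (by positivity) hC0j hvt0 hvtm
    rw [← hq] at hthis
    rw [hp, Polynomial.eval_mul, Polynomial.eval_X, abs_mul,
      abs_of_nonneg hvt0.le]
    calc v t * |Polynomial.eval (v t) q| ≤ v t * (2 * (C₀ * (m:ℝ)^c) * m) := by
          apply mul_le_mul_of_nonneg_left _ hvt0.le
          exact hthis
      _ = 2 * (C₀ * (m:ℝ)^c) * m * v t := by ring

  -- analytic part
  have hmpos : (0:ℝ) < (m:ℝ) := by linarith
  have hg1base : Summable (fun s : ℕ => ((s:ℝ)+1)^(-β)) := SBgen β (by linarith)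
  have hcgt1 : (1:ℝ) < (c:ℝ) := by linarith
  have hg2base : Summable (fun s : ℕ => ((s:ℝ)+1)^(-(c:ℝ))) := SBgen _ hcgt1
  have hbridge : ∀ s : ℕ, (((s:ℝ)+1)⁻¹)^c = ((s:ℝ)+1)^(-(c:ℝ)) := by
    intro s
    have h : (0:ℝ) < (s:ℝ)+1 := by positivity
    rw [Real.rpow_neg h.le, Real.rpow_natCast, inv_pow]
  set B : ℝ := 2 * (C₀ * (m:ℝ)^c) * m with hB
  have hB0 : 0 ≤ B := by positivity
  set g1 : ℕ → ℝ := fun s => if s < m then 0 else C₀ * ((s:ℝ)+1)^(-β) with hg1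
  set g2 : ℕ → ℝ := fun s => if s < m then 0 else B * (((s:ℝ)+1)⁻¹)^c with hg2
  have hg1nn : ∀ s, 0 ≤ g1 s := by
    intro s
    simp only [hg1]
    split
    · exact le_refl _
    · positivity
  have hg2nn : ∀ s, 0 ≤ g2 s := by
    intro s
    simp only [hg2]
    split
    · exact le_refl _
    · exact mul_nonneg hB0 (by positivity)
  have hsg1 : Summable g1 := by
    apply Summable.of_nonneg_of_le hg1nn _ (hg1base.mul_left C₀)
    intro s
    simp only [hg1]
    split
    · positivity
    · exact le_refl _
  have hsg2 : Summable g2 := by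
    apply Summable.of_nonneg_of_le hg2nn _ (hg2base.mul_left B)
    intro s
    simp only [hg2]
    split
    · exact mul_nonneg hB0 (Real.rpow_nonneg (by positivity) _)
    · rw [hbridge s]
  have hsρ : Summable (fun s : ℕ => ρ (s+1)) := by
    apply Summable.of_abs
    apply Summable.of_nonneg_of_le (fun s => abs_nonneg _) _ (hg1base.mul_left C₀)
    intro s
    have h1 : (1:ℕ) ≤ s+1 := by omega
    have h2 := hρ (s+1) h1
    push_cast at h2
    exact h2
  have hsF : Summable (fun s : ℕ => ∑ k : Fin m, α k * ((s:ℝ)+1)^(-(b k))) := by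
    apply summable_sum
    intro k _
    exact ((SBgen (b k) (hbgt k)).mul_left (α k))
  have hsD : Summable (fun s : ℕ => |ρ (s+1) - ∑ k : Fin m, α k * ((s:ℝ)+1)^(-(b k))|) :=
    (hsρ.sub hsF).abs
  have hvcast : ∀ s : ℕ, v (s+1) = (((s:ℝ)+1)⁻¹)^c := by
    intro s
    simp only [hv]
    push_cast
    ring
  have hpt : ∀ s : ℕ, |ρ (s+1) - ∑ k : Fin m, α k * ((s:ℝ)+1)^(-(b k))| ≤ g1 s + g2 s := by
    intro s
    rw [hrep s]
    by_cases hs : s < m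
    · rw [hnode (s+1) (by omega) (by omega)]
      simp [hg1, hg2, hs]
    · push_neg at hs
      have hsm1 : (1:ℕ) ≤ s+1 := by omega
      have habs : |ρ (s+1) - p.eval (v (s+1))| ≤ |ρ (s+1)| + |p.eval (v (s+1))| := by
        rw [sub_eq_add_neg]
        exact (abs_add_le _ _).trans (by rw [abs_neg])
      have h1 : |ρ (s+1)| ≤ C₀*((s:ℝ)+1)^(-β) := by
        have h2 := hρ (s+1) hsm1
        push_cast at h2
        exact h2
      have h2 : |p.eval (v (s+1))| ≤ B * (((s:ℝ)+1)⁻¹)^c := by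
        have h3 := htail (s+1) (by omega)
        calc |p.eval (v (s+1))| ≤ 2 * (C₀ * (m:ℝ)^c) * m * v (s+1) := h3
          _ = B * (((s:ℝ)+1)⁻¹)^c := by rw [hvcast s, hB]
      calc |ρ (s+1) - p.eval (v (s+1))| ≤ |ρ (s+1)| + |p.eval (v (s+1))| := habs
        _ ≤ C₀*((s:ℝ)+1)^(-β) + B * (((s:ℝ)+1)⁻¹)^c := add_le_add h1 h2
        _ = g1 s + g2 s := by
            simp only [hg1, hg2, if_neg (not_lt.mpr hs)]
  -- master bounds
  set A1 : ℝ := C₀ * (((m:ℝ)+1)^((2:ℝ)-β)) with hA1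
  have hA1nn : 0 ≤ A1 := by positivity
  have hmb1 : ∀ s:ℕ, m ≤ s → g1 s ≤ A1 * ((s:ℝ)⁻¹ - ((s:ℝ)+1)⁻¹) := by
    intro s hs
    have hs1 : (1:ℝ) ≤ (s:ℝ) := by
      have : 1 ≤ s := hm1.trans hs
      exact_mod_cast this
    have hsm : (m:ℝ) ≤ (s:ℝ) := by exact_mod_cast hs
    have hsp : (0:ℝ) < (s:ℝ) := by linarith
    have hid : (s:ℝ)⁻¹ - ((s:ℝ)+1)⁻¹ = ((s:ℝ)*((s:ℝ)+1))⁻¹ := by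
      rw [mul_inv]
      field_simp
      ring
    have e1 : ((s:ℝ)+1)^(-β) = ((s:ℝ)+1)^((2:ℝ)-β) * ((s:ℝ)+1)^(-(2:ℝ)) := by
      rw [← Real.rpow_add (by positivity)]
      congr 1
      ring
    have e2 : ((s:ℝ)+1)^((2:ℝ)-β) ≤ ((m:ℝ)+1)^((2:ℝ)-β) :=
      Real.rpow_le_rpow_of_nonpos (by positivity) (by linarith) (by linarith)
    have e3 : ((s:ℝ)+1)^(-(2:ℝ)) ≤ ((s:ℝ)*((s:ℝ)+1))⁻¹ := by
      rw [show (-(2:ℝ)) = -((2:ℕ):ℝ) by norm_num, Real.rpow_neg (by positivity),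
        Real.rpow_natCast]
      apply inv_anti₀ (by positivity)
      nlinarith
    simp only [hg1, if_neg (not_lt.mpr hs)]
    calc C₀ * ((s:ℝ)+1)^(-β)
        = C₀ * (((s:ℝ)+1)^((2:ℝ)-β) * ((s:ℝ)+1)^(-(2:ℝ))) := by rw [← e1]
      _ ≤ C₀ * (((m:ℝ)+1)^((2:ℝ)-β) * ((s:ℝ)*((s:ℝ)+1))⁻¹) := by
          apply mul_le_mul_of_nonneg_left _ hC₀.le
          apply mul_le_mul e2 e3 (Real.rpow_nonneg (by positivity) _)
            (Real.rpow_nonneg (by positivity) _)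
      _ = A1 * ((s:ℝ)⁻¹ - ((s:ℝ)+1)⁻¹) := by
          rw [hid, hA1]
          ring
  have ht1 := master m hm A1 hA1nn g1 hg1nn
    (fun s hsm => by simp [hg1, hsm]) hmb1 hsg1
  set A2 : ℝ := B * ((((m:ℝ)+1)⁻¹)^d) with hA2
  have hA2nn : 0 ≤ A2 := mul_nonneg hB0 (by positivity)
  have hmb2 : ∀ s:ℕ, m ≤ s → g2 s ≤ A2 * ((s:ℝ)⁻¹ - ((s:ℝ)+1)⁻¹) := by
    intro s hs
    have hs1 : (1:ℝ) ≤ (s:ℝ) := by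
      have : 1 ≤ s := hm1.trans hs
      exact_mod_cast this
    have hsm : (m:ℝ) ≤ (s:ℝ) := by exact_mod_cast hs
    have hsp : (0:ℝ) < (s:ℝ) := by linarith
    have hid : (s:ℝ)⁻¹ - ((s:ℝ)+1)⁻¹ = ((s:ℝ)*((s:ℝ)+1))⁻¹ := by
      rw [mul_inv]
      field_simp
      ring
    have f0 : (((s:ℝ)+1)⁻¹)^c = (((s:ℝ)+1)⁻¹)^d * (((s:ℝ)+1)⁻¹)^2 := by
      rw [hd, pow_add]
    have f1 : (((s:ℝ)+1)⁻¹)^d ≤ (((m:ℝ)+1)⁻¹)^d := by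
      apply pow_le_pow_left₀ (by positivity)
      apply inv_anti₀ (by positivity)
      linarith
    have f2 : (((s:ℝ)+1)⁻¹)^2 ≤ ((s:ℝ)*((s:ℝ)+1))⁻¹ := by
      rw [inv_pow]
      apply inv_anti₀ (by positivity)
      nlinarith
    simp only [hg2, if_neg (not_lt.mpr hs)]
    calc B * (((s:ℝ)+1)⁻¹)^c
        = B * ((((s:ℝ)+1)⁻¹)^d * (((s:ℝ)+1)⁻¹)^2) := by rw [← f0]
      _ ≤ B * ((((m:ℝ)+1)⁻¹)^d * ((s:ℝ)*((s:ℝ)+1))⁻¹) := by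
          apply mul_le_mul_of_nonneg_left _ hB0
          apply mul_le_mul f1 f2 (by positivity) (by positivity)
      _ = A2 * ((s:ℝ)⁻¹ - ((s:ℝ)+1)⁻¹) := by
          rw [hid, hA2]
          ring
  have ht2 := master m hm A2 hA2nn g2 hg2nn
    (fun s hsm => by simp [hg2, hsm]) hmb2 hsg2
  -- final numeric bounds
  have hmn0 : (0:ℝ) < (m:ℝ)^n := by positivity
  have hfin1 : A1/(m:ℝ) ≤ C₀ * ((m:ℝ)^n)⁻¹ := by
    have r1 : ((m:ℝ)+1)^((2:ℝ)-β) ≤ (m:ℝ)^((2:ℝ)-β) :=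
      Real.rpow_le_rpow_of_nonpos hmpos (by linarith) (by linarith)
    have r2 : (m:ℝ)^((1:ℝ)-β) = (m:ℝ)^((2:ℝ)-β) / (m:ℝ) := by
      rw [show ((1:ℝ)-β) = ((2:ℝ)-β) - 1 by ring, Real.rpow_sub hmpos, Real.rpow_one]
    have r3 : (m:ℝ)^((1:ℝ)-β) ≤ (m:ℝ)^(-(n:ℝ)) :=
      Real.rpow_le_rpow_of_exponent_le hmr (by linarith)
    have r4 : (m:ℝ)^(-(n:ℝ)) = ((m:ℝ)^n)⁻¹ := by
      rw [Real.rpow_neg (by linarith), Real.rpow_natCast]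
    calc A1/(m:ℝ) = C₀ * (((m:ℝ)+1)^((2:ℝ)-β) / (m:ℝ)) := by
          rw [hA1]
          ring
      _ ≤ C₀ * ((m:ℝ)^((2:ℝ)-β) / (m:ℝ)) := by
          apply mul_le_mul_of_nonneg_left _ hC₀.le
          exact div_le_div_of_nonneg_right r1 hmpos.le
      _ = C₀ * (m:ℝ)^((1:ℝ)-β) := by rw [← r2]
      _ ≤ C₀ * ((m:ℝ)^n)⁻¹ := by
          apply mul_le_mul_of_nonneg_left _ hC₀.le
          rw [← r4]
          exact r3
  have hfin2 : A2/(m:ℝ) ≤ 2*C₀ * ((m:ℝ)^n)⁻¹ := by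
    have e5 : (((m:ℝ)+1)⁻¹)^d = (((m:ℝ)+1)⁻¹)^c * ((m:ℝ)+1)^2 := by
      rw [hd, pow_add]
      have : (((m:ℝ)+1)⁻¹)^2 * ((m:ℝ)+1)^2 = 1 := by
        rw [inv_pow]
        field_simp
      calc (((m:ℝ)+1)⁻¹)^d = (((m:ℝ)+1)⁻¹)^d * ((((m:ℝ)+1)⁻¹)^2 * ((m:ℝ)+1)^2) := by
            rw [this, mul_one]
        _ = (((m:ℝ)+1)⁻¹)^d * (((m:ℝ)+1)⁻¹)^2 * ((m:ℝ)+1)^2 := by ring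
    have e6 : (m:ℝ)^c * (((m:ℝ)+1)⁻¹)^c = ((m:ℝ)/((m:ℝ)+1))^c := by
      rw [div_pow, div_eq_mul_inv, inv_pow]
    have e7 : ((m:ℝ)/((m:ℝ)+1))^c ≤ ((1:ℝ)/2)^K := by
      rw [hcdef, pow_mul]
      apply pow_le_pow_left₀ (by positivity)
      have hb2 := bern (m+1) (by omega)
      push_cast at hb2
      have : ((m:ℝ)+1-1) = (m:ℝ) := by ring
      rw [this] at hb2
      exact hb2
    have e8 : ((m:ℝ)+1)^2 * ((1:ℝ)/2)^K ≤ ((m:ℝ)^n)⁻¹ := by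
      have hp2 := pow2K m n hm1
      rw [← hKdef] at hp2
      have h12 : ((1:ℝ)/2)^K = ((2:ℝ)^K)⁻¹ := by rw [one_div, inv_pow]
      rw [h12, ← div_eq_mul_inv, show (((m:ℝ)^n)⁻¹) = 1/((m:ℝ)^n) by rw [one_div],
        div_le_div_iff₀ (by positivity) (by positivity)]
      nlinarith [hp2]
    have hstart : A2/(m:ℝ) = 2*C₀ * (((m:ℝ)+1)^2 * ((m:ℝ)/((m:ℝ)+1))^c) := by
      rw [hA2, hB, e5, ← e6]
      field_simp
    rw [hstart]
    calc 2*C₀ * (((m:ℝ)+1)^2 * ((m:ℝ)/((m:ℝ)+1))^c)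
        ≤ 2*C₀ * (((m:ℝ)+1)^2 * ((1:ℝ)/2)^K) := by
          apply mul_le_mul_of_nonneg_left _ (by positivity)
          apply mul_le_mul_of_nonneg_left e7 (by positivity)
      _ ≤ 2*C₀ * ((m:ℝ)^n)⁻¹ := by
          apply mul_le_mul_of_nonneg_left e8 (by positivity)
  have hinv0 : (0:ℝ) ≤ ((m:ℝ)^n)⁻¹ := by positivity
  calc (∑' s : ℕ, |ρ (s + 1) - ∑ k, α k * ((s : ℝ) + 1) ^ (-(b k))|)
      ≤ ∑' s : ℕ, (g1 s + g2 s) := Summable.tsum_le_tsum hpt hsD (hsg1.add hsg2)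
    _ = (∑' s, g1 s) + ∑' s, g2 s := Summable.tsum_add hsg1 hsg2
    _ ≤ A1/(m:ℝ) + A2/(m:ℝ) := add_le_add ht1 ht2
    _ ≤ C₀ * ((m:ℝ)^n)⁻¹ + 2*C₀ * ((m:ℝ)^n)⁻¹ := add_le_add hfin1 hfin2
    _ ≤ 4*C₀ / (m:ℝ)^n := by
        rw [div_eq_mul_inv]
        nlinarith [hinv0, hC₀.le]
end

section
/- Define f* : {−1, 0, 1}³ → ℝ by f*(x₀, x₁, x₂) = −1 if x₀ = −1, f*(x₀, x₁, x₂) = x₁ if x₀ = 0, and f*(x₀, x₁, x₂) = x₂ if x₀ = 1. Then for all real numbers a₀, a₁, a₂, c there exist x₀, x₁, x₂ ∈ {−1, 0, 1} such that | f*(x₀, x₁, x₂) − (a₀ x₀ + a₁ x₁ + a₂ x₂ + c) | ≥ 2/3. In other words, the best uniform approximation of f* on {−1,0,1}³ by affine functions has error at least 2/3. -/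
open Classical in
/-- The adaptive-memory target `f*` on `{−1,0,1}³`:
`f*(x₀,x₁,x₂) = −1` if `x₀ = −1`, `= x₁` if `x₀ = 0`, `= x₂` if `x₀ = 1`. -/
noncomputable def fstar (x₀ x₁ x₂ : ℝ) : ℝ :=
  if x₀ = -1 then -1 else if x₀ = 0 then x₁ else x₂

/-- the best uniform approximation of `f*` on `{−1,0,1}³` by affine functions
`a₀x₀ + a₁x₁ + a₂x₂ + c` has error at least `2/3`. -/
theorem stmt7 (a₀ a₁ a₂ c : ℝ) :
    ∃ x₀ ∈ ({-1, 0, 1} : Set ℝ), ∃ x₁ ∈ ({-1, 0, 1} : Set ℝ), ∃ x₂ ∈ ({-1, 0, 1} : Set ℝ),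
      2 / 3 ≤ |fstar x₀ x₁ x₂ - (a₀ * x₀ + a₁ * x₁ + a₂ * x₂ + c)| := by
  by_contra h
  push_neg at h
  have hA := h (-1) (by simp) 1 (by simp) (-1) (by simp)
  have hB := h 0 (by simp) 1 (by simp) (-1) (by simp)
  have hC := h 1 (by simp) 1 (by simp) (-1) (by simp)
  simp only [fstar] at hA hB hC
  norm_num at hA hB hC
  rw [abs_lt] at hA hB hC
  linarith [hA.1, hA.2, hB.1, hB.2, hC.1, hC.2]
end

section
/- Define g : {−1, 0, 1} → {0, 1, 2} by g(x) = x + 1. For every ε > 0 there exist a positive integer m, real coefficients α₁,…,α_m, and exponents β₁,…,β_m with β_k > 0 for every k, such that for every sequence x : ℕ → {−1, 0, 1}, | ∑_{s=0}^{∞} ( ∑_{k=1}^{m} α_k e^{−β_k (s − g(x(0)))} ) · x(s) − x(g(x(0))) | ≤ ε. -/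
set_option maxHeartbeats 2000000 in
/-- with `g(x) = x + 1` on the alphabet `{−1,0,1}`, for every `ε > 0` there is
a shifted sum of `m` decaying exponentials (a dot-product attention head) extracting the
adaptively located token `x(g(x(0)))` to uniform accuracy `ε` over all input sequences. -/
theorem stmt8 :
    ∀ ε : ℝ, 0 < ε →
      ∃ m : ℕ, 0 < m ∧
        ∃ α β : Fin m → ℝ, (∀ k, 0 < β k) ∧
          ∀ x : ℕ → ℤ, (∀ s, x s ∈ ({-1, 0, 1} : Set ℤ)) →
            |(∑' s : ℕ,
                (∑ k, α k * Real.exp (-(β k) * ((s : ℝ) - ((x 0 : ℝ) + 1)))) * (x s : ℝ))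
              - ((x ((x 0 + 1).toNat) : ℝ))| ≤ ε := by
  intro ε hε
  obtain ⟨b, hb1, hkey⟩ : ∃ b : ℝ, 1 ≤ b ∧ 8 * Real.exp (-b) ≤ ε := by
    refine ⟨max 1 (Real.log (8 / ε)), le_max_left _ _, ?_⟩
    have h8ε : (0:ℝ) < 8 / ε := by positivity
    have hexpb : 8 / ε ≤ Real.exp (max 1 (Real.log (8 / ε))) := by
      calc 8 / ε = Real.exp (Real.log (8 / ε)) := (Real.exp_log h8ε).symm
      _ ≤ _ := Real.exp_le_exp.mpr (le_max_right _ _)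
    rw [Real.exp_neg]
    rw [div_le_iff₀ hε] at hexpb
    have hE : (0:ℝ) < Real.exp (max 1 (Real.log (8 / ε))) := Real.exp_pos _
    calc 8 * (Real.exp (max 1 (Real.log (8 / ε))))⁻¹
        ≤ (Real.exp (max 1 (Real.log (8 / ε))) * ε) * (Real.exp (max 1 (Real.log (8 / ε))))⁻¹ :=
          mul_le_mul_of_nonneg_right hexpb (by positivity)
    _ = ε := by field_simp
  have hb0 : (0:ℝ) < b := lt_of_lt_of_le one_pos hb1
  set A : ℝ := Real.exp b with hAdef
  have hA0 : (0:ℝ) < A := Real.exp_pos b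
  have he2 : (2:ℝ) ≤ A := by
    have := Real.add_one_le_exp b
    rw [hAdef]; linarith
  set D : ℝ := (A - 1) * (A ^ 2 - 1) with hDdef
  have hD : 0 < D := by
    apply mul_pos <;> nlinarith
  have hD4 : A ^ 3 ≤ 4 * D := by
    rw [hDdef]
    nlinarith [he2, sq_nonneg (A - 2)]
  refine ⟨3, by norm_num,
    ![A ^ 3 / D, -(A + A ^ 2) / D, 1 / D],
    ![b, 2 * b, 3 * b], ?_, ?_⟩
  · intro k
    fin_cases k <;> simp <;> linarith
  intro x hx
  set B : ℕ := (x 0 + 1).toNat with hBdef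
  have hx' : ∀ s, x s = -1 ∨ x s = 0 ∨ x s = 1 := by
    intro s
    have := hx s
    simpa [Set.mem_insert_iff, Set.mem_singleton_iff] using this
  have hxabs : ∀ s, |(x s : ℝ)| ≤ 1 := by
    intro s
    rcases hx' s with h | h | h <;> simp [h]
  have hnn : 0 ≤ x 0 + 1 := by rcases hx' 0 with h | h | h <;> simp [h]
  have hBZ : ((B : ℤ)) = x 0 + 1 := Int.toNat_of_nonneg hnn
  have hBcast : (B : ℝ) = (x 0 : ℝ) + 1 := by
    have : (((B : ℤ)) : ℝ) = ((x 0 + 1 : ℤ) : ℝ) := by rw [hBZ]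
    push_cast at this
    linarith
  have hB2 : B ≤ 2 := by
    rcases hx' 0 with h | h | h <;> simp [hBdef, h] <;> norm_num
  set u : ℕ → ℝ := fun s => Real.exp (-b * ((s : ℝ) - ((x 0 : ℝ) + 1))) with hudef
  set F : ℕ → ℝ := fun s => u s * (u s - A) * (u s - A ^ 2) / D * (x s : ℝ) with hFdef
  have hDne : D ≠ 0 := ne_of_gt hD
  have hinner : ∀ s : ℕ,
      (∑ k, (![A ^ 3 / D, -(A + A ^ 2) / D, 1 / D]) k *
        Real.exp (-((![b, 2 * b, 3 * b]) k) * ((s : ℝ) - ((x 0 : ℝ) + 1))))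
        = u s * (u s - A) * (u s - A ^ 2) / D := by
    intro s
    have hus : u s = Real.exp (-b * ((s : ℝ) - ((x 0 : ℝ) + 1))) := rfl
    have h2 : Real.exp (-(2 * b) * ((s : ℝ) - ((x 0 : ℝ) + 1))) = u s * u s := by
      rw [hus, ← Real.exp_add]; ring_nf
    have h3 : Real.exp (-(3 * b) * ((s : ℝ) - ((x 0 : ℝ) + 1))) = u s * u s * u s := by
      rw [hus, ← Real.exp_add, ← Real.exp_add]; ring_nf
    rw [Fin.sum_univ_three]
    simp only [Matrix.cons_val_zero, Matrix.cons_val_one, Matrix.head_cons,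
      Matrix.cons_val_two, Matrix.tail_cons]
    rw [h2, h3, ← hus]
    field_simp
    ring
  have huB : u B = 1 := by
    rw [hudef]
    simp only
    rw [hBcast]
    norm_num
  have hFB : F B = (x B : ℝ) := by
    have hcalc : (1:ℝ) * (1 - A) * (1 - A ^ 2) / D = 1 := by
      rw [hDdef]
      have h1 : A - 1 ≠ 0 := by nlinarith
      have h2 : A ^ 2 - 1 ≠ 0 := by nlinarith
      field_simp
      ring
    simp only [hFdef]
    rw [huB, hcalc, one_mul]
  have hFlt : ∀ s, s < B → F s = 0 := by
    intro s hs
    have hd : B = s + 1 ∨ B = s + 2 := by omega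
    rcases hd with hd | hd
    · have hT : (s : ℝ) - ((x 0 : ℝ) + 1) = -1 := by
        rw [← hBcast, hd]; push_cast; ring
      have hus : u s = A := by
        rw [hudef]; simp only; rw [hT, hAdef]; norm_num
      simp only [hFdef]; rw [hus]; ring
    · have hT : (s : ℝ) - ((x 0 : ℝ) + 1) = -2 := by
        rw [← hBcast, hd]; push_cast; ring
      have hus : u s = A ^ 2 := by
        rw [hudef]; simp only; rw [hT, hAdef, sq, ← Real.exp_add]
        ring_nf
      simp only [hFdef]; rw [hus]; ring
  -- tail bound
  have hr0 : (0:ℝ) ≤ Real.exp (-b) := le_of_lt (Real.exp_pos _)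
  have hr12 : Real.exp (-b) ≤ 1 / 2 := by
    rw [Real.exp_neg]
    calc (Real.exp b)⁻¹ ≤ (2:ℝ)⁻¹ := by
          rw [← hAdef]; exact inv_anti₀ two_pos he2
    _ = 1 / 2 := by norm_num
  have hr1 : Real.exp (-b) < 1 := by linarith
  have hG : ∀ j : ℕ, |F (j + (B + 1))| ≤ 4 * Real.exp (-b) * Real.exp (-b) ^ j := by
    intro j
    have hT : ((j + (B + 1) : ℕ) : ℝ) - ((x 0 : ℝ) + 1) = (j : ℝ) + 1 := by
      rw [← hBcast]; push_cast; ring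
    have hu : u (j + (B + 1)) = Real.exp (-b) ^ (j + 1) := by
      rw [hudef]; simp only
      rw [hT, show -b * ((j : ℝ) + 1) = (((j + 1 : ℕ)) : ℝ) * (-b) by push_cast; ring,
        Real.exp_nat_mul]
    set v : ℝ := Real.exp (-b) ^ (j + 1) with hvdef
    have hv0 : 0 < v := pow_pos (Real.exp_pos _) _
    have hv1 : v ≤ 1 := pow_le_one₀ hr0 (le_of_lt hr1)
    have hA1 : (1:ℝ) ≤ A := by linarith
    have hA21 : (1:ℝ) ≤ A ^ 2 := by nlinarith
    have habs1 : |u (j + (B + 1)) * (u (j + (B + 1)) - A) * (u (j + (B + 1)) - A ^ 2) / D|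
        = v * |v - A| * |v - A ^ 2| / D := by
      rw [hu, abs_div, abs_mul, abs_mul, abs_of_pos hv0, abs_of_pos hD]
    have h2 : |v - A| ≤ A := abs_le.mpr ⟨by linarith, by linarith⟩
    have h3 : |v - A ^ 2| ≤ A ^ 2 := abs_le.mpr ⟨by linarith, by linarith⟩
    have hmm : |v - A| * |v - A ^ 2| ≤ A * A ^ 2 :=
      mul_le_mul h2 h3 (abs_nonneg _) (by linarith)
    have hstep : v * |v - A| * |v - A ^ 2| / D ≤ v * A ^ 3 / D := by
      rw [div_le_div_iff₀ hD hD]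
      have := mul_le_mul_of_nonneg_left hmm hv0.le
      nlinarith [hD]
    have hb1' : |F (j + (B + 1))| ≤ v * A ^ 3 / D := by
      simp only [hFdef]
      rw [abs_mul, habs1]
      calc v * |v - A| * |v - A ^ 2| / D * |(x (j + (B + 1)) : ℝ)|
          ≤ (v * A ^ 3 / D) * 1 :=
            mul_le_mul hstep (hxabs _) (abs_nonneg _) (by positivity)
      _ = v * A ^ 3 / D := by ring
    have hb2' : v * A ^ 3 / D ≤ 4 * v := by
      have hq : A ^ 3 / D ≤ 4 := by
        rw [div_le_iff₀ hD]; linarith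
      calc v * A ^ 3 / D = v * (A ^ 3 / D) := by ring
      _ ≤ v * 4 := mul_le_mul_of_nonneg_left hq hv0.le
      _ = 4 * v := by ring
    have hb3' : (4:ℝ) * v = 4 * Real.exp (-b) * Real.exp (-b) ^ j := by
      rw [hvdef, pow_succ]; ring
    linarith
  -- summability
  have hgeo : Summable (fun j : ℕ => 4 * Real.exp (-b) * Real.exp (-b) ^ j) :=
    (summable_geometric_of_lt_one hr0 hr1).mul_left _
  have hGabs : Summable (fun j : ℕ => |F (j + (B + 1))|) :=
    Summable.of_nonneg_of_le (fun j => abs_nonneg _) hG hgeo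
  have hGsum : Summable (fun j : ℕ => F (j + (B + 1))) := Summable.of_abs hGabs
  have hFsum : Summable F := (summable_nat_add_iff (B + 1)).mp hGsum
  have hsplit : ∑ i ∈ Finset.range (B + 1), F i + ∑' j : ℕ, F (j + (B + 1)) = ∑' s : ℕ, F s :=
    Summable.sum_add_tsum_nat_add (B + 1) hFsum
  have hhead : ∑ i ∈ Finset.range (B + 1), F i = (x B : ℝ) := by
    rw [Finset.sum_eq_single_of_mem B (Finset.self_mem_range_succ B)]
    · exact hFB
    · intro i hi hne
      exact hFlt i (by
        have := Finset.mem_range.mp hi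
        omega)
  have htail : |∑' j : ℕ, F (j + (B + 1))| ≤ 8 * Real.exp (-b) := by
    have h1 : |∑' j : ℕ, F (j + (B + 1))| ≤ ∑' j : ℕ, |F (j + (B + 1))| := by
      have hle : ∑' j : ℕ, F (j + (B + 1)) ≤ ∑' j : ℕ, |F (j + (B + 1))| :=
        Summable.tsum_le_tsum (fun j => le_abs_self _) hGsum hGabs
      have hge : -∑' j : ℕ, F (j + (B + 1)) ≤ ∑' j : ℕ, |F (j + (B + 1))| := by
        rw [← tsum_neg]
        exact Summable.tsum_le_tsum (fun j => neg_le_abs _) hGsum.neg hGabs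
      exact abs_le.mpr ⟨by linarith, hle⟩
    have h2 : ∑' j : ℕ, |F (j + (B + 1))| ≤ ∑' j : ℕ, 4 * Real.exp (-b) * Real.exp (-b) ^ j :=
      Summable.tsum_le_tsum hG hGabs hgeo
    have h3 : ∑' j : ℕ, 4 * Real.exp (-b) * Real.exp (-b) ^ j
        = 4 * Real.exp (-b) * (1 - Real.exp (-b))⁻¹ := by
      rw [tsum_mul_left, tsum_geometric_of_lt_one hr0 hr1]
    have h4 : (1 - Real.exp (-b))⁻¹ ≤ 2 := by
      calc (1 - Real.exp (-b))⁻¹ ≤ ((1:ℝ)/2)⁻¹ :=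
            inv_anti₀ (by norm_num) (by linarith)
      _ = 2 := by norm_num
    have h5 : 4 * Real.exp (-b) * (1 - Real.exp (-b))⁻¹ ≤ 8 * Real.exp (-b) := by
      nlinarith [Real.exp_pos (-b), h4]
    linarith
  have hmain : (∑' s : ℕ,
      (∑ k, (![A ^ 3 / D, -(A + A ^ 2) / D, 1 / D]) k *
        Real.exp (-((![b, 2 * b, 3 * b]) k) * ((s : ℝ) - ((x 0 : ℝ) + 1)))) * (x s : ℝ))
      = ∑' s : ℕ, F s := by
    apply tsum_congr
    intro s
    rw [hinner s, hFdef]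
  rw [hmain]
  have hdiff : ∑' s : ℕ, F s - (x B : ℝ) = ∑' j : ℕ, F (j + (B + 1)) := by
    rw [← hsplit, hhead]; ring
  rw [hdiff]
  linarith
end
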